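/- arXiv:2302.07587 — 12 statements merged into one kernel-verified Lean document; each statement's English description precedes it below -/
import Mathlib

section
/- (Lemma: the Busemann–Hausdorff volume is Euclidean rigid; concrete form.) Let m ≥ 1 and let ‖·‖ be a norm on ℝ^m such that ‖x‖ ≥ |x| for every x ∈ ℝ^m, where |·| is the standard Euclidean norm. If the Lebesgue measure of the closed unit ball {x ∈ ℝ^m : ‖x‖ ≤ 1} is at least the Lebesgue measure of the Euclidean closed unit ball {x ∈ ℝ^m : |x| ≤ 1}, then ‖x‖ = |x| for all x ∈ ℝ^m. -/
open MeasureTheory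

/-- The Busemann–Hausdorff volume is Euclidean rigid (concrete form): if a norm `N`
on `ℝ^m` dominates the Euclidean norm pointwise but its closed unit ball has Lebesgue
measure at least that of the Euclidean closed unit ball, then `N` equals the
Euclidean norm. -/
theorem busemann_hausdorff_euclidean_rigid
    (m : ℕ) (hm : 1 ≤ m) (N : EuclideanSpace ℝ (Fin m) → ℝ)
    (N_add : ∀ x y, N (x + y) ≤ N x + N y)
    (N_smul : ∀ (c : ℝ) (x), N (c • x) = |c| * N x)
    (N_eq_zero : ∀ x, N x = 0 → x = 0)
    (hge : ∀ x, ‖x‖ ≤ N x)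
    (hvol : volume {x : EuclideanSpace ℝ (Fin m) | ‖x‖ ≤ 1}
        ≤ volume {x : EuclideanSpace ℝ (Fin m) | N x ≤ 1}) :
    ∀ x, N x = ‖x‖ := by
  have N_zero : N 0 = 0 := by
    have := N_smul 0 0
    simpa using this
  -- N is bounded by a constant times the norm
  set C : ℝ := ∑ i, N (EuclideanSpace.single i (1:ℝ)) with hC
  have N_nonneg : ∀ x, 0 ≤ N x := fun x => (norm_nonneg x).trans (hge x)
  have N_le : ∀ x, N x ≤ C * ‖x‖ := by
    intro x
    have hx : x = ∑ i, x i • EuclideanSpace.single i (1:ℝ) := by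
      simpa using ((EuclideanSpace.basisFun (Fin m) ℝ).toBasis.sum_repr x).symm
    calc N x = N (∑ i, x i • EuclideanSpace.single i (1:ℝ)) := by rw [← hx]
      _ ≤ ∑ i, N (x i • EuclideanSpace.single i (1:ℝ)) :=
          Finset.le_sum_of_subadditive N N_zero.le N_add _ _
      _ = ∑ i, |x i| * N (EuclideanSpace.single i (1:ℝ)) := by simp [N_smul]
      _ ≤ ∑ i, ‖x‖ * N (EuclideanSpace.single i (1:ℝ)) := by
          refine Finset.sum_le_sum fun i _ => ?_
          have h1 : |x i| ≤ ‖x‖ := by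
            rw [EuclideanSpace.norm_eq, show |x i| = Real.sqrt ((x i)^2) from (Real.sqrt_sq_eq_abs _).symm]
            apply Real.sqrt_le_sqrt
            have := Finset.single_le_sum (f := fun j => ‖x j‖^2)
              (fun j _ => sq_nonneg _) (Finset.mem_univ i)
            simpa [Real.norm_eq_abs, sq_abs] using this
          exact mul_le_mul_of_nonneg_right h1 (N_nonneg _)
      _ = C * ‖x‖ := by rw [hC, Finset.sum_mul]; exact Finset.sum_congr rfl fun i _ => mul_comm _ _
  have N_cont : Continuous N := by
    have hlip : LipschitzWith (Real.toNNReal C) N := by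
      refine LipschitzWith.of_dist_le_mul fun x y => ?_
      have h1 : N x - N y ≤ N (x - y) := by
        have := N_add (x - y) y
        simp at this
        linarith
      have h2 : N y - N x ≤ N (x - y) := by
        have hxy : N (-(x-y)) = N (x - y) := by
          have := N_smul (-1) (x - y)
          simpa using this
        have h3 : N y ≤ N x + N (-(x - y)) := by
          have := N_add x (-(x - y))
          have h4 : x + -(x - y) = y := by abel
          rwa [h4] at this
        linarith
      have h5 : N (x - y) ≤ C * ‖x - y‖ := N_le _
      have hd : dist (N x) (N y) ≤ C * dist x y := by
        rw [Real.dist_eq, dist_eq_norm]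
        rcases abs_cases (N x - N y) with ⟨h, _⟩ | ⟨h, _⟩ <;> rw [h] <;> linarith
      refine hd.trans ?_
      have hC0 : 0 ≤ C := Finset.sum_nonneg fun i _ => N_nonneg _
      rw [Real.coe_toNNReal C hC0]
    exact hlip.continuous
  -- main argument
  intro x
  refine le_antisymm ?_ (hge x)
  by_contra h
  push_neg at h
  have hx0 : x ≠ 0 := by
    intro hx
    rw [hx, N_zero] at h
    simpa using lt_of_le_of_lt (norm_nonneg (0 : EuclideanSpace ℝ (Fin m))) h
  have hnx : 0 < ‖x‖ := norm_pos_iff.mpr hx0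
  have hNx : 0 < N x := hnx.trans h
  set s : ℝ := 2 / (‖x‖ + N x) with hs
  have hden : 0 < ‖x‖ + N x := by linarith
  have hspos : 0 < s := by positivity
  set y := s • x with hy
  have hy1 : ‖y‖ < 1 := by
    rw [hy, norm_smul, Real.norm_eq_abs, abs_of_pos hspos, hs]
    rw [div_mul_eq_mul_div, div_lt_one hden]
    linarith
  have hy2 : 1 < N y := by
    rw [hy, N_smul, abs_of_pos hspos, hs]
    rw [div_mul_eq_mul_div, lt_div_iff₀ hden]
    linarith
  set U : Set (EuclideanSpace ℝ (Fin m)) := {z | ‖z‖ < 1 ∧ 1 < N z} with hU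
  have hUopen : IsOpen U := by
    have h1 : IsOpen {z : EuclideanSpace ℝ (Fin m) | ‖z‖ < 1} :=
      isOpen_lt continuous_norm continuous_const
    have h2 : IsOpen {z : EuclideanSpace ℝ (Fin m) | 1 < N z} :=
      isOpen_lt continuous_const N_cont
    exact h1.inter h2
  have hUpos : 0 < volume U := hUopen.measure_pos volume ⟨y, hy1, hy2⟩
  set K : Set (EuclideanSpace ℝ (Fin m)) := {z | N z ≤ 1} with hK
  set B : Set (EuclideanSpace ℝ (Fin m)) := {z | ‖z‖ ≤ 1} with hB
  have hKB : K ⊆ B := fun z hz => le_trans (hge z) hz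
  have hUB : U ⊆ B := fun z hz => le_of_lt hz.1
  have hKU : Disjoint K U := by
    rw [Set.disjoint_left]
    intro z hz hz'
    exact absurd hz (not_le.mpr hz'.2)
  have hKmeas : MeasurableSet K := (isClosed_le N_cont continuous_const).measurableSet
  have hunion : volume K + volume U = volume (K ∪ U) :=
    (measure_union hKU hUopen.measurableSet).symm
  have hsub : K ∪ U ⊆ B := Set.union_subset hKB hUB
  have hle : volume K + volume U ≤ volume B := hunion.le.trans (measure_mono hsub)
  have hBball : B = Metric.closedBall 0 1 := by
    ext z; simp [hB, Metric.mem_closedBall, dist_zero_right]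
  have hBfin : volume B < ⊤ := by
    rw [hBball]; exact measure_closedBall_lt_top
  have hKfin : volume K < ⊤ := lt_of_le_of_lt (measure_mono hKB) hBfin
  have : volume K + volume U ≤ volume K := hle.trans hvol
  have : volume U = 0 := by
    have h' := ENNReal.cancel_of_ne (ne_of_lt hKfin)
    have h2 : volume K + volume U ≤ volume K + 0 := by simpa using this
    simpa using h'.add_le_add_iff_left.mp h2
  exact absurd this (ne_of_gt hUpos)
end

section
/- (Lemma: the Gromov-mass-star volume is Euclidean rigid; concrete form.) Let m ≥ 1 and let ‖·‖ be a norm on ℝ^m with ‖x‖ ≥ |x| for every x ∈ ℝ^m, where |·| is the standard Euclidean norm. Assume that for every invertible linear map A : ℝ^m → ℝ^m such that the closed unit ball {x : ‖x‖ ≤ 1} is contained in the parallelepiped A({x ∈ ℝ^m : |x_i| ≤ 1 for all i}), one has |det A| ≥ 1. Then ‖x‖ = |x| for all x ∈ ℝ^m. -/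
open MeasureTheory
open scoped RealInnerProductSpace

/-- The Gromov-mass-star volume is Euclidean rigid (concrete form): if a norm `N`
on `ℝ^m` dominates the Euclidean norm pointwise and every parallelepiped
`A '' {x | ∀ i, |x i| ≤ 1}` (for `A` an invertible linear map) containing the
`N`-unit ball satisfies `|det A| ≥ 1`, then `N` equals the Euclidean norm. -/
theorem gromov_mass_star_euclidean_rigid
    (m : ℕ) (hm : 1 ≤ m) (N : EuclideanSpace ℝ (Fin m) → ℝ)
    (N_add : ∀ x y, N (x + y) ≤ N x + N y)
    (N_smul : ∀ (c : ℝ) (x), N (c • x) = |c| * N x)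
    (N_eq_zero : ∀ x, N x = 0 → x = 0)
    (hge : ∀ x, ‖x‖ ≤ N x)
    (hpar : ∀ A : EuclideanSpace ℝ (Fin m) ≃ₗ[ℝ] EuclideanSpace ℝ (Fin m),
        {x | N x ≤ 1} ⊆ A '' {x : EuclideanSpace ℝ (Fin m) | ∀ i, |x i| ≤ 1} →
          1 ≤ |LinearMap.det (A : EuclideanSpace ℝ (Fin m) →ₗ[ℝ] EuclideanSpace ℝ (Fin m))|) :
    ∀ x, N x = ‖x‖ := by
  by_contra hcon
  push_neg at hcon
  obtain ⟨x₀, hx0ne⟩ := hcon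
  have hx0 : ‖x₀‖ < N x₀ := (hge x₀).lt_of_ne (Ne.symm hx0ne)
  have hN0 : N 0 = 0 := by simpa using N_smul 0 0
  have hx₀ne : x₀ ≠ 0 := by
    intro h; rw [h, hN0] at hx0; simp at hx0
  have hx₀pos : 0 < ‖x₀‖ := norm_pos_iff.mpr hx₀ne
  set z : EuclideanSpace ℝ (Fin m) := ‖x₀‖⁻¹ • x₀ with hz_def
  have hz : ‖z‖ = 1 := by
    rw [hz_def, norm_smul, norm_inv, norm_norm]
    field_simp
  have hNz : 1 < N z := by
    rw [hz_def, N_smul, abs_of_nonneg (by positivity)]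
    rw [show (1:ℝ) = ‖x₀‖⁻¹ * ‖x₀‖ by field_simp]
    exact mul_lt_mul_of_pos_left hx0 (by positivity)
  -- continuity and convexity of N
  have hconv : ConvexOn ℝ Set.univ N := by
    refine ⟨convex_univ, fun x _ y _ a b ha hb hab => ?_⟩
    calc N (a • x + b • y) ≤ N (a • x) + N (b • y) := N_add _ _
      _ = a * N x + b * N y := by
          rw [N_smul, N_smul, abs_of_nonneg ha, abs_of_nonneg hb]
  have hNcont : Continuous N := by
    have := hconv.continuousOn isOpen_univ
    exact continuousOn_univ.mp this
  set K : Set (EuclideanSpace ℝ (Fin m)) := {x | N x ≤ 1} with hK_def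
  have hKconv : Convex ℝ K := by
    intro x hx y hy a b ha hb hab
    have : N (a • x + b • y) ≤ a * N x + b * N y := by
      calc N (a • x + b • y) ≤ N (a • x) + N (b • y) := N_add _ _
        _ = a * N x + b * N y := by
            rw [N_smul, N_smul, abs_of_nonneg ha, abs_of_nonneg hb]
    have : N (a • x + b • y) ≤ a * 1 + b * 1 := by
      refine this.trans (add_le_add ?_ ?_)
      · exact mul_le_mul_of_nonneg_left hx ha
      · exact mul_le_mul_of_nonneg_left hy hb
    simpa [hab, hK_def] using this
  have hKclosed : IsClosed K := isClosed_le hNcont continuous_const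
  have hzK : z ∉ K := by simp only [hK_def, Set.mem_setOf_eq]; linarith
  obtain ⟨f, s, hfs, hsz⟩ := geometric_hahn_banach_closed_point hKconv hKclosed hzK
  have h0K : (0 : EuclideanSpace ℝ (Fin m)) ∈ K := by simp [hK_def, hN0]
  have hs_pos : 0 < s := by have := hfs 0 h0K; simpa using this
  -- Riesz representation
  set u : EuclideanSpace ℝ (Fin m) := (InnerProductSpace.toDual ℝ (EuclideanSpace ℝ (Fin m))).symm f with hu_def
  have hu : ∀ x : EuclideanSpace ℝ (Fin m), (inner ℝ u x : ℝ) = f x := fun x => InnerProductSpace.toDual_symm_apply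
  have hsu : s < ‖u‖ := by
    have h1 : s < f z := hsz
    have h2 : f z ≤ ‖u‖ := by
      rw [← hu]
      calc (inner ℝ u z : ℝ) ≤ ‖u‖ * ‖z‖ := real_inner_le_norm u z
        _ = ‖u‖ := by rw [hz, mul_one]
    linarith
  have hu_pos : 0 < ‖u‖ := lt_trans hs_pos hsu
  set t : ℝ := s / ‖u‖ with ht_def
  have ht_pos : 0 < t := div_pos hs_pos hu_pos
  have ht_lt : t < 1 := (div_lt_one hu_pos).mpr hsu
  set w : EuclideanSpace ℝ (Fin m) := ‖u‖⁻¹ • u with hw_def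
  have hw_norm : ‖w‖ = 1 := by
    rw [hw_def, norm_smul, norm_inv, norm_norm]; field_simp
  -- the key slab bound
  have hslab : ∀ y ∈ K, |(inner ℝ w y : ℝ)| ≤ t := by
    intro y hy
    have hy' : -y ∈ K := by
      simp only [hK_def, Set.mem_setOf_eq] at hy ⊢
      have : N (-y) = N y := by simpa using N_smul (-1) y
      rwa [this]
    have h1 : f y < s := hfs y hy
    have h2 : -(f y) < s := by have := hfs (-y) hy'; simpa using this
    have habs : |f y| ≤ s := abs_le.mpr ⟨by linarith, le_of_lt h1⟩
    have : (inner ℝ w y : ℝ) = ‖u‖⁻¹ * f y := by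
      rw [hw_def, real_inner_smul_left, hu]
    rw [this, abs_mul, abs_of_nonneg (by positivity), ht_def, div_eq_inv_mul]
    exact mul_le_mul_of_nonneg_left habs (by positivity)
  -- orthonormal basis with first vector w
  set i0 : Fin m := ⟨0, hm⟩ with hi0_def
  have hw_on : Orthonormal ℝ (Set.restrict {i0} (fun _ : Fin m => w)) := by
    rw [orthonormal_iff_ite]
    rintro ⟨i, hi⟩ ⟨j, hj⟩
    simp only [Set.mem_singleton_iff] at hi hj
    subst hi; subst hj
    have h1 : (inner ℝ w w : ℝ) = 1 := by
      rw [real_inner_self_eq_norm_mul_norm, hw_norm]; norm_num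
    rw [if_pos rfl]
    exact h1
  obtain ⟨b, hb⟩ := hw_on.exists_orthonormalBasis_extension_of_card_eq
    (by simp [finrank_euclideanSpace])
  have hb0 : b i0 = w := hb i0 rfl
  -- the diagonal scaling map
  set c : Fin m → ℝ := fun i => if i = i0 then t else 1 with hc_def
  have hc_ne : ∀ i, c i ≠ 0 := by
    intro i; rw [hc_def]; dsimp only
    split <;> simp [ne_of_gt ht_pos]
  have hci0 : c i0 = t := by simp [hc_def]
  have hcne1 : ∀ i, i ≠ i0 → c i = 1 := by intro i hi; simp [hc_def, hi]
  set D₀ : (Fin m → ℝ) ≃ₗ[ℝ] (Fin m → ℝ) :=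
    { toFun := fun x i => c i * x i
      invFun := fun x i => (c i)⁻¹ * x i
      map_add' := fun x y => by funext i; simp [mul_add]
      map_smul' := fun a x => by funext i; simp [smul_eq_mul]; ring
      left_inv := fun x => by
        funext i; simp only []; rw [← mul_assoc, inv_mul_cancel₀ (hc_ne i), one_mul]
      right_inv := fun x => by
        funext i; simp only []; rw [← mul_assoc, mul_inv_cancel₀ (hc_ne i), one_mul] } with hD₀_def
  set P : EuclideanSpace ℝ (Fin m) ≃ₗ[ℝ] (Fin m → ℝ) := WithLp.linearEquiv 2 ℝ (Fin m → ℝ) with hP_def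
  set D : EuclideanSpace ℝ (Fin m) ≃ₗ[ℝ] EuclideanSpace ℝ (Fin m) := P.trans (D₀.trans P.symm) with hD_def
  have hD_apply : ∀ (x : EuclideanSpace ℝ (Fin m)) (i : Fin m), D x i = c i * x i := by
    intro x i
    rfl
  set A : EuclideanSpace ℝ (Fin m) ≃ₗ[ℝ] EuclideanSpace ℝ (Fin m) := D.trans b.repr.symm.toLinearEquiv with hA_def
  -- coordinates of A.symm
  have hAsymm : ∀ (y : EuclideanSpace ℝ (Fin m)) (i : Fin m), A.symm y i = (c i)⁻¹ * (inner ℝ (b i) y : ℝ) := by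
    intro y i
    have : A.symm y = D.symm (b.repr.symm.toLinearEquiv.symm y) := rfl
    rw [this]
    have h1 : (b.repr.symm.toLinearEquiv.symm y : EuclideanSpace ℝ (Fin m)) = b.repr y := rfl
    rw [h1]
    have h2 : ∀ (x : EuclideanSpace ℝ (Fin m)) (i : Fin m), D.symm x i = (c i)⁻¹ * x i := by
      intro x j
      rfl
    rw [h2]
    rw [b.repr_apply_apply]
  -- inclusion of the unit ball in the parallelepiped
  have hincl : K ⊆ A '' {x : EuclideanSpace ℝ (Fin m) | ∀ i, |x i| ≤ 1} := by
    intro y hy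
    refine ⟨A.symm y, ?_, A.apply_symm_apply y⟩
    intro i
    rw [hAsymm y i]
    by_cases hi : i = i0
    · subst hi
      rw [hb0]
      have := hslab y hy
      rw [abs_mul, abs_inv]
      rw [hci0, abs_of_nonneg (le_of_lt ht_pos)]
      calc t⁻¹ * |(inner ℝ w y : ℝ)| ≤ t⁻¹ * t := by
            exact mul_le_mul_of_nonneg_left this (by positivity)
        _ = 1 := by field_simp
    · have hbi : ‖b i‖ = 1 := b.orthonormal.1 i
      have hy1 : N y ≤ 1 := hy
      have : |(inner ℝ (b i) y : ℝ)| ≤ ‖y‖ := by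
        calc |(inner ℝ (b i) y : ℝ)| ≤ ‖b i‖ * ‖y‖ := abs_real_inner_le_norm _ _
          _ = ‖y‖ := by rw [hbi, one_mul]
      rw [hcne1 i hi]
      simp only [inv_one, one_mul]
      exact this.trans ((hge y).trans hy1)
  -- determinant computation
  set e : OrthonormalBasis (Fin m) ℝ (EuclideanSpace ℝ (Fin m)) := EuclideanSpace.basisFun (Fin m) ℝ with he_def
  have hdetD : LinearMap.det (D : EuclideanSpace ℝ (Fin m) →ₗ[ℝ] EuclideanSpace ℝ (Fin m)) = t := by
    rw [← LinearMap.det_toMatrix e.toBasis]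
    have : LinearMap.toMatrix e.toBasis e.toBasis (D : EuclideanSpace ℝ (Fin m) →ₗ[ℝ] EuclideanSpace ℝ (Fin m)) = Matrix.diagonal c := by
      ext i j
      rw [LinearMap.toMatrix_apply]
      have hrepr : ∀ (x : EuclideanSpace ℝ (Fin m)) (i : Fin m), e.toBasis.repr x i = x i := fun x i => rfl
      rw [hrepr, LinearEquiv.coe_coe, hD_apply]
      have hej : (e.toBasis j : EuclideanSpace ℝ (Fin m)) = EuclideanSpace.single j 1 := by
        rw [OrthonormalBasis.coe_toBasis, he_def, EuclideanSpace.basisFun_apply]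
      rw [hej]
      rcases eq_or_ne i j with h | h
      · subst h; simp [Matrix.diagonal]
      · simp [Matrix.diagonal, h, EuclideanSpace.single_apply, Ne.symm h]
    rw [this, Matrix.det_diagonal, hc_def]
    rw [Finset.prod_ite_eq' Finset.univ i0 (fun _ => t)]
    simp
  have hdetIso : |LinearMap.det (b.repr.symm.toLinearEquiv : EuclideanSpace ℝ (Fin m) →ₗ[ℝ] EuclideanSpace ℝ (Fin m))| = 1 := by
    rw [← LinearMap.det_toMatrix e.toBasis]
    have hmat : LinearMap.toMatrix e.toBasis e.toBasis
        (b.repr.symm.toLinearEquiv : EuclideanSpace ℝ (Fin m) →ₗ[ℝ] EuclideanSpace ℝ (Fin m)) = e.toBasis.toMatrix b.toBasis := by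
      ext i j
      rw [LinearMap.toMatrix_apply, Module.Basis.toMatrix_apply]
      congr 1
    rw [hmat]
    have := e.det_to_matrix_orthonormalBasis_real b
    rw [Module.Basis.det_apply] at this
    have hcoe : e.toBasis.toMatrix (b.toBasis : Fin m → EuclideanSpace ℝ (Fin m)) = e.toBasis.toMatrix b := by
      congr 1
    rw [hcoe]
    rcases this with h | h <;> simp [h]
  have hdetA : |LinearMap.det (A : EuclideanSpace ℝ (Fin m) →ₗ[ℝ] EuclideanSpace ℝ (Fin m))| = t := by
    have hcomp : (A : EuclideanSpace ℝ (Fin m) →ₗ[ℝ] EuclideanSpace ℝ (Fin m)) =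
        (b.repr.symm.toLinearEquiv : EuclideanSpace ℝ (Fin m) →ₗ[ℝ] EuclideanSpace ℝ (Fin m)).comp (D : EuclideanSpace ℝ (Fin m) →ₗ[ℝ] EuclideanSpace ℝ (Fin m)) := rfl
    rw [hcomp, LinearMap.det_comp, abs_mul, hdetIso, one_mul, hdetD,
      abs_of_nonneg (le_of_lt ht_pos)]
  have := hpar A hincl
  rw [hdetA] at this
  linarith
end

section
/- (Normalization of the Gromov-mass-star volume on Euclidean space.) Let m ≥ 1 and let A : ℝ^m → ℝ^m be an invertible linear map such that the Euclidean closed unit ball {x ∈ ℝ^m : |x| ≤ 1} is contained in the parallelepiped A({x ∈ ℝ^m : |x_i| ≤ 1 for all i}). Then |det A| ≥ 1. Consequently a parallelepiped of minimal Lebesgue measure containing the Euclidean unit ball has Lebesgue measure exactly 2^m, attained by the cube {x : |x_i| ≤ 1 for all i}. -/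
open MeasureTheory ENNReal

open Matrix in
lemma aux_trace_eq_sum_eigenvalues {n : Type*} [Fintype n] [DecidableEq n]
    {A : Matrix n n ℝ} (hA : A.IsHermitian) :
    A.trace = ∑ i, hA.eigenvalues i := by
  conv_lhs => rw [hA.spectral_theorem, Unitary.conjStarAlgAut_apply]
  rw [Matrix.trace_mul_cycle]
  rw [(Matrix.mem_unitaryGroup_iff').mp (hA.eigenvectorUnitary).2, one_mul,
    Matrix.trace_diagonal]
  simp

open Matrix in
lemma aux_hadamard {n : Type*} [Fintype n] [DecidableEq n] [Nonempty n]
    {M : Matrix n n ℝ} (h : ∀ i, ∑ j, (M i j) ^ 2 ≤ 1) : |M.det| ≤ 1 := by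
  set G := M * Mᴴ with hG
  have hpsd : G.PosSemidef := Matrix.posSemidef_self_mul_conjTranspose M
  have hherm := hpsd.1
  have htr : G.trace ≤ (Fintype.card n : ℝ) := by
    rw [Matrix.trace]
    calc ∑ i, G.diag i ≤ ∑ _i : n, (1:ℝ) := by
          refine Finset.sum_le_sum fun i _ => ?_
          simpa [G, Matrix.mul_apply, Matrix.diag, pow_two] using h i
      _ = (Fintype.card n : ℝ) := by simp
  have hcard : (0:ℝ) < (Fintype.card n : ℝ) := by
    exact_mod_cast Fintype.card_pos
  -- AM-GM on eigenvalues
  have hev := fun i => hpsd.eigenvalues_nonneg i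
  have hamgm := Real.geom_mean_le_arith_mean_weighted Finset.univ
    (fun _ => (Fintype.card n : ℝ)⁻¹) hherm.eigenvalues
    (fun i _ => by positivity) (by
      rw [Finset.sum_const, Finset.card_univ, nsmul_eq_mul, mul_inv_cancel₀ hcard.ne'])
    (fun i _ => hev i)
  have hprod : ∏ i, hherm.eigenvalues i ≤ 1 := by
    have h1 : ∑ i, (Fintype.card n : ℝ)⁻¹ * hherm.eigenvalues i ≤ 1 := by
      rw [← Finset.mul_sum, ← aux_trace_eq_sum_eigenvalues hherm]
      rw [inv_mul_le_iff₀ hcard, mul_one]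
      exact htr
    have h2 : ∏ i, (hherm.eigenvalues i) ^ ((Fintype.card n : ℝ)⁻¹) ≤ 1 :=
      hamgm.trans h1
    have h3 : (∏ i, (hherm.eigenvalues i) ^ ((Fintype.card n : ℝ)⁻¹)) ^ (Fintype.card n : ℕ)
        ≤ 1 := by
      exact pow_le_one₀ (Finset.prod_nonneg fun i _ => Real.rpow_nonneg (hev i) _) h2
    calc ∏ i, hherm.eigenvalues i
        = (∏ i, (hherm.eigenvalues i) ^ ((Fintype.card n : ℝ)⁻¹)) ^ (Fintype.card n : ℕ) := by
          rw [← Finset.prod_pow]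
          refine Finset.prod_congr rfl fun i _ => ?_
          rw [← Real.rpow_natCast ((hherm.eigenvalues i) ^ ((Fintype.card n : ℝ)⁻¹)) _,
            ← Real.rpow_mul (hev i)]
          simp [hcard.ne']
      _ ≤ 1 := h3
  have hdet : G.det = M.det ^ 2 := by
    rw [hG, Matrix.det_mul, Matrix.det_conjTranspose, pow_two]
    simp
  have : M.det ^ 2 ≤ 1 := by
    rw [← hdet, hherm.det_eq_prod_eigenvalues]
    exact_mod_cast hprod
  nlinarith [abs_nonneg M.det, sq_abs M.det]

lemma aux_det_ge (m : ℕ) (hm : 1 ≤ m)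
    (A : EuclideanSpace ℝ (Fin m) ≃ₗ[ℝ] EuclideanSpace ℝ (Fin m))
    (hA : Metric.closedBall (0 : EuclideanSpace ℝ (Fin m)) 1 ⊆
      A '' {x : EuclideanSpace ℝ (Fin m) | ∀ i, |x i| ≤ 1}) :
    1 ≤ |LinearMap.det (A : EuclideanSpace ℝ (Fin m) →ₗ[ℝ] EuclideanSpace ℝ (Fin m))| := by
  haveI : Nonempty (Fin m) := ⟨⟨0, hm⟩⟩
  set f : EuclideanSpace ℝ (Fin m) →ₗ[ℝ] EuclideanSpace ℝ (Fin m) :=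
    (A.symm : EuclideanSpace ℝ (Fin m) →ₗ[ℝ] EuclideanSpace ℝ (Fin m)) with hf
  -- key property: f maps the unit ball into the cube
  have key : ∀ x : EuclideanSpace ℝ (Fin m), ‖x‖ ≤ 1 → ∀ i, |f x i| ≤ 1 := by
    intro x hx i
    obtain ⟨y, hy, rfl⟩ := hA (Metric.mem_closedBall.2 (by simpa using hx))
    simpa [hf] using hy i
  set b := (EuclideanSpace.basisFun (Fin m) ℝ).toBasis with hb
  set M := LinearMap.toMatrix b b f with hM
  have hMapp : ∀ i j, M i j = f (b j) i := by
    intro i j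
    rw [hM, LinearMap.toMatrix_apply]
    rfl
  -- coordinate expansion of f
  have hcoord : ∀ (x : EuclideanSpace ℝ (Fin m)) (i : Fin m),
      f x i = ∑ j, x j * M i j := by
    intro x i
    conv_lhs => rw [← b.sum_repr x]
    rw [map_sum]
    have h1 : (∑ j, f (b.repr x j • b j)) i = ∑ j, (f (b.repr x j • b j)) i :=
      by simp
    rw [h1]
    refine Finset.sum_congr rfl fun j _ => ?_
    rw [LinearMap.map_smul, hMapp]
    have : (b.repr x j • f (b j)) i = b.repr x j * f (b j) i := rfl
    rw [this]
    congr 1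
  -- rows of M have norm at most 1
  have hrow : ∀ i, ∑ j, (M i j) ^ 2 ≤ 1 := by
    intro i
    have hs0 : 0 ≤ ∑ j, (M i j) ^ 2 := Finset.sum_nonneg fun j _ => sq_nonneg _
    rcases eq_or_lt_of_le hs0 with hs | hs
    · rw [← hs]; norm_num
    · set c : ℝ := Real.sqrt (∑ j, (M i j) ^ 2) with hc
      have hcc : ∑ j, (M i j) ^ 2 = c ^ 2 := (Real.sq_sqrt hs0).symm
      have hc0' : 0 < c := Real.sqrt_pos.2 hs
      set x : EuclideanSpace ℝ (Fin m) := WithLp.toLp 2 (fun j => c⁻¹ * M i j) with hx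
      have hxnorm : ‖x‖ ≤ 1 := by
        rw [EuclideanSpace.norm_eq]
        have h2 : ∀ j, ‖x j‖ ^ 2 = c⁻¹ ^ 2 * (M i j) ^ 2 := by
          intro j; rw [hx]; simp [mul_pow, sq_abs]
        rw [Finset.sum_congr rfl fun j _ => h2 j, ← Finset.mul_sum, hcc, inv_pow,
          inv_mul_cancel₀ (by positivity), Real.sqrt_one]
      have hk := key x hxnorm i
      rw [hcoord x i] at hk
      have hsum : ∑ j, x j * M i j = c⁻¹ * ∑ j, (M i j) ^ 2 := by
        rw [Finset.mul_sum]
        exact Finset.sum_congr rfl fun j _ => by rw [hx]; ring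
      have hcinv : c⁻¹ * ∑ j, (M i j) ^ 2 = c := by
        rw [hcc]; field_simp
      rw [hsum, hcinv] at hk
      have hcle : c ≤ 1 := le_of_abs_le hk
      rw [hcc]
      nlinarith
  have hdetf : |LinearMap.det f| ≤ 1 := by
    rw [← LinearMap.det_toMatrix b f]
    exact aux_hadamard hrow
  have hmul : LinearMap.det (A : EuclideanSpace ℝ (Fin m) →ₗ[ℝ] EuclideanSpace ℝ (Fin m))
      * LinearMap.det f = 1 := by
    rw [← LinearMap.det_comp]
    have : (A : EuclideanSpace ℝ (Fin m) →ₗ[ℝ] EuclideanSpace ℝ (Fin m)) ∘ₗ f = LinearMap.id := by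
      ext x
      simp [hf]
    rw [this, LinearMap.det_id]
  have h0 : LinearMap.det f ≠ 0 := by
    intro h'
    rw [h', mul_zero] at hmul
    norm_num at hmul
  have := abs_mul (LinearMap.det (A : EuclideanSpace ℝ (Fin m) →ₗ[ℝ] EuclideanSpace ℝ (Fin m)))
    (LinearMap.det f)
  rw [hmul, abs_one] at this
  nlinarith [abs_nonneg (LinearMap.det f), abs_pos.2 h0,
    abs_nonneg (LinearMap.det (A : EuclideanSpace ℝ (Fin m) →ₗ[ℝ] EuclideanSpace ℝ (Fin m)))]


lemma aux_volume_cube (m : ℕ) :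
    volume {x : EuclideanSpace ℝ (Fin m) | ∀ i, |x i| ≤ 1} = 2 ^ m := by
  have hmp : MeasurePreserving (MeasurableEquiv.toLp 2 (Fin m → ℝ)).symm :=
    EuclideanSpace.volume_preserving_symm_measurableEquiv_toLp (Fin m)
  have hset : {x : EuclideanSpace ℝ (Fin m) | ∀ i, |x i| ≤ 1} =
      (MeasurableEquiv.toLp 2 (Fin m → ℝ)).symm ⁻¹'
        (Set.univ.pi fun _ => Set.Icc (-1 : ℝ) 1) := by
    ext x
    simp only [Set.mem_preimage, Set.mem_pi, Set.mem_univ, Set.mem_Icc, forall_true_left,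
      Set.mem_setOf_eq, abs_le,
      Equiv.coe_fn_mk]
    rfl
  rw [hset, hmp.measure_preimage (MeasurableSet.univ_pi fun _ => measurableSet_Icc).nullMeasurableSet,
    volume_pi_pi]
  simp [Real.volume_Icc]
  norm_num

lemma aux_ball_subset (m : ℕ) :
    Metric.closedBall (0 : EuclideanSpace ℝ (Fin m)) 1 ⊆
      {x : EuclideanSpace ℝ (Fin m) | ∀ i, |x i| ≤ 1} := by
  intro x hx i
  have hx' : ‖x‖ ≤ 1 := by simpa using hx
  refine le_trans ?_ hx'
  have : |x i| = Real.sqrt (|x i| ^ 2) := by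
    rw [Real.sqrt_sq (abs_nonneg _)]
  rw [this, EuclideanSpace.norm_eq]
  apply Real.sqrt_le_sqrt
  have h2 : ∀ j ∈ Finset.univ, ‖x j‖ ^ 2 = |x j| ^ 2 := fun j _ => by simp
  rw [Finset.sum_congr rfl h2]
  exact Finset.single_le_sum (f := fun j => |x j| ^ 2) (fun j _ => sq_nonneg _) (Finset.mem_univ i)

lemma aux_volume_image (m : ℕ)
    (A : EuclideanSpace ℝ (Fin m) ≃ₗ[ℝ] EuclideanSpace ℝ (Fin m)) :
    volume (A '' {x : EuclideanSpace ℝ (Fin m) | ∀ i, |x i| ≤ 1}) =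
      ENNReal.ofReal
        |LinearMap.det (A : EuclideanSpace ℝ (Fin m) →ₗ[ℝ] EuclideanSpace ℝ (Fin m))| * 2 ^ m := by
  rw [← aux_volume_cube m]
  exact Measure.addHaar_image_linearMap volume
    (A : EuclideanSpace ℝ (Fin m) →ₗ[ℝ] EuclideanSpace ℝ (Fin m)) _



/-- Normalization of the Gromov-mass-star volume on Euclidean space: any
parallelepiped `A '' {x | ∀ i, |x i| ≤ 1}` containing the Euclidean closed unit
ball satisfies `|det A| ≥ 1`; consequently the minimal Lebesgue measure of a
parallelepiped containing the Euclidean unit ball is exactly `2^m`, attained by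
the cube `{x | ∀ i, |x i| ≤ 1}`. -/
theorem gromov_mass_star_normalization_euclidean
    (m : ℕ) (hm : 1 ≤ m) :
    (∀ A : EuclideanSpace ℝ (Fin m) ≃ₗ[ℝ] EuclideanSpace ℝ (Fin m),
        Metric.closedBall (0 : EuclideanSpace ℝ (Fin m)) 1 ⊆
          A '' {x : EuclideanSpace ℝ (Fin m) | ∀ i, |x i| ≤ 1} →
        1 ≤ |LinearMap.det (A : EuclideanSpace ℝ (Fin m) →ₗ[ℝ] EuclideanSpace ℝ (Fin m))|) ∧
    IsLeast {v : ℝ≥0∞ | ∃ A : EuclideanSpace ℝ (Fin m) ≃ₗ[ℝ] EuclideanSpace ℝ (Fin m),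
        Metric.closedBall (0 : EuclideanSpace ℝ (Fin m)) 1 ⊆
          A '' {x : EuclideanSpace ℝ (Fin m) | ∀ i, |x i| ≤ 1} ∧
        v = volume (A '' {x : EuclideanSpace ℝ (Fin m) | ∀ i, |x i| ≤ 1})} (2 ^ m) ∧
    Metric.closedBall (0 : EuclideanSpace ℝ (Fin m)) 1 ⊆
      {x : EuclideanSpace ℝ (Fin m) | ∀ i, |x i| ≤ 1} ∧
    volume {x : EuclideanSpace ℝ (Fin m) | ∀ i, |x i| ≤ 1} = 2 ^ m := by
  refine ⟨fun A hA => aux_det_ge m hm A hA, ⟨?_, ?_⟩, aux_ball_subset m, aux_volume_cube m⟩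
  · refine ⟨LinearEquiv.refl ℝ _, ?_, ?_⟩
    · have : ⇑(LinearEquiv.refl ℝ (EuclideanSpace ℝ (Fin m))) ''
          {x : EuclideanSpace ℝ (Fin m) | ∀ i, |x i| ≤ 1} =
          {x : EuclideanSpace ℝ (Fin m) | ∀ i, |x i| ≤ 1} := by
        exact Set.image_id _
      rw [this]
      exact aux_ball_subset m
    · have : ⇑(LinearEquiv.refl ℝ (EuclideanSpace ℝ (Fin m))) ''
          {x : EuclideanSpace ℝ (Fin m) | ∀ i, |x i| ≤ 1} =
          {x : EuclideanSpace ℝ (Fin m) | ∀ i, |x i| ≤ 1} := by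
        exact Set.image_id _
      rw [this, aux_volume_cube m]
  · rintro v ⟨A, hsub, rfl⟩
    rw [aux_volume_image m A]
    have h1 := aux_det_ge m hm A hsub
    calc (2 : ℝ≥0∞) ^ m = 1 * 2 ^ m := (one_mul _).symm
      _ ≤ ENNReal.ofReal
            |LinearMap.det (A : EuclideanSpace ℝ (Fin m) →ₗ[ℝ] EuclideanSpace ℝ (Fin m))|
            * 2 ^ m := by
          gcongr
          rw [← ENNReal.ofReal_one]
          exact ENNReal.ofReal_le_ofReal h1
end

section
/- (Shrinking step in the proof that the Gromov-mass-star volume is Euclidean rigid.) Let m ≥ 1, let f_1, …, f_m be a basis of the dual space of ℝ^m, and let P = {x ∈ ℝ^m : |f_i(x)| ≤ 1 for all i}. Let K ⊆ P be a compact set such that |f_1(x)| < 1 for every x ∈ K. Then there exists a parallelepiped P' with K ⊆ P' and with Lebesgue measure of P' strictly smaller than the Lebesgue measure of P. -/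
open MeasureTheory

/-- Shrinking step in the proof that the Gromov-mass-star volume is Euclidean rigid:
if `P = {x | ∀ i, |fᵢ x| ≤ 1}` for a basis `f` of the dual space, and `K ⊆ P` is a
compact set on which `|f₀ x| < 1`, then there is a parallelepiped `P'` (given by
another dual basis `g`) containing `K` with strictly smaller Lebesgue measure. -/
theorem parallelepiped_shrink
    (m : ℕ) (hm : 1 ≤ m)
    (f : Module.Basis (Fin m) ℝ (Module.Dual ℝ (EuclideanSpace ℝ (Fin m))))
    (K : Set (EuclideanSpace ℝ (Fin m))) (hK : IsCompact K)
    (hKP : K ⊆ {x : EuclideanSpace ℝ (Fin m) | ∀ i, |f i x| ≤ 1})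
    (hK1 : ∀ x ∈ K, |f ⟨0, hm⟩ x| < 1) :
    ∃ g : Module.Basis (Fin m) ℝ (Module.Dual ℝ (EuclideanSpace ℝ (Fin m))),
      K ⊆ {x : EuclideanSpace ℝ (Fin m) | ∀ i, |g i x| ≤ 1} ∧
      volume {x : EuclideanSpace ℝ (Fin m) | ∀ i, |g i x| ≤ 1} <
        volume {x : EuclideanSpace ℝ (Fin m) | ∀ i, |f i x| ≤ 1} := by
  classical
  set i0 : Fin m := ⟨0, hm⟩
  -- choose c' ∈ (0,1) bounding |f i0| on K
  obtain ⟨c', hc'0, hc'1, hc'K⟩ : ∃ c' : ℝ, 0 < c' ∧ c' < 1 ∧ ∀ x ∈ K, |f i0 x| ≤ c' := by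
    rcases K.eq_empty_or_nonempty with hKe | hKne
    · exact ⟨1/2, by norm_num, by norm_num, by simp [hKe]⟩
    · have hcont : ContinuousOn (fun x : EuclideanSpace ℝ (Fin m) => |f i0 x|) K :=
        ((f i0).continuous_of_finiteDimensional.abs).continuousOn
      obtain ⟨x₀, hx₀K, hx₀⟩ := hK.exists_isMaxOn hKne hcont
      refine ⟨max (|f i0 x₀|) (1/2), by positivity, ?_, fun x hx => ?_⟩
      · exact max_lt (hK1 x₀ hx₀K) (by norm_num)
      · exact le_max_of_le_left (hx₀ hx)
  -- the new basis
  set w : Fin m → ℝˣ := fun i => if i = i0 then Units.mk0 c'⁻¹ (by positivity) else 1 with hw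
  set g : Module.Basis (Fin m) ℝ (Module.Dual ℝ (EuclideanSpace ℝ (Fin m))) := f.unitsSMul w with hg
  have hgapp : ∀ i (x : EuclideanSpace ℝ (Fin m)),
      g i x = (if i = i0 then c'⁻¹ else 1) * f i x := by
    intro i x
    rw [hg, Module.Basis.unitsSMul_apply]
    by_cases h : i = i0 <;> simp [hw, h, Units.smul_def]
  -- linear equivalence x ↦ (f i x)
  have hinj : Function.Injective
      (LinearMap.pi (fun i => (f i : EuclideanSpace ℝ (Fin m) →ₗ[ℝ] ℝ))) := by
    rw [← LinearMap.ker_eq_bot, LinearMap.ker_eq_bot']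
    intro x hx
    have hfi : ∀ i, f i x = 0 := fun i => congrFun hx i
    rw [← Module.forall_dual_apply_eq_zero_iff ℝ x]
    intro φ
    have hrepr := f.sum_repr φ
    calc φ x = (∑ i, f.repr φ i • f i) x := by rw [hrepr]
      _ = 0 := by rw [LinearMap.sum_apply]; simp [hfi]
  set Φ : EuclideanSpace ℝ (Fin m) ≃ₗ[ℝ] (Fin m → ℝ) :=
    LinearMap.linearEquivOfInjective
      (LinearMap.pi (fun i => (f i : EuclideanSpace ℝ (Fin m) →ₗ[ℝ] ℝ))) hinj
      (by simp [finrank_euclideanSpace]) with hΦ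
  have hΦapp : ∀ (x : EuclideanSpace ℝ (Fin m)) i, Φ x i = f i x := by
    intro x i
    rw [hΦ, LinearMap.linearEquivOfInjective_apply, LinearMap.pi_apply]
  -- the scaling map
  set d : Fin m → ℝ := fun i => if i = i0 then c'⁻¹ else 1 with hd
  set D : (Fin m → ℝ) →ₗ[ℝ] (Fin m → ℝ) := Matrix.toLin' (Matrix.diagonal d) with hD
  set T : EuclideanSpace ℝ (Fin m) →ₗ[ℝ] EuclideanSpace ℝ (Fin m) :=
    (Φ.symm : (Fin m → ℝ) →ₗ[ℝ] EuclideanSpace ℝ (Fin m)) ∘ₗ D ∘ₗ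
      (Φ : EuclideanSpace ℝ (Fin m) →ₗ[ℝ] (Fin m → ℝ)) with hT
  have hΦss : (Φ : EuclideanSpace ℝ (Fin m) →ₗ[ℝ] (Fin m → ℝ)) =
      (Φ.symm.symm : EuclideanSpace ℝ (Fin m) →ₗ[ℝ] (Fin m → ℝ)) := by
    rw [LinearEquiv.symm_symm]
  have hdetT : LinearMap.det T = c'⁻¹ := by
    rw [hT, hΦss, LinearMap.det_conj D Φ.symm, hD, LinearMap.det_toLin',
      Matrix.det_diagonal, hd]
    simp
  have hfT : ∀ (x : EuclideanSpace ℝ (Fin m)) i, f i (T x) = g i x := by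
    intro x i
    have hcomm : Φ (T x) = D (Φ x) := by
      simp [hT, LinearMap.comp_apply]
    rw [← hΦapp, hcomm, hD, Matrix.toLin'_apply, Matrix.mulVec_diagonal, hΦapp, hgapp, hd]
  have hsets : {x : EuclideanSpace ℝ (Fin m) | ∀ i, |g i x| ≤ 1} =
      T ⁻¹' {x : EuclideanSpace ℝ (Fin m) | ∀ i, |f i x| ≤ 1} := by
    ext x
    simp only [Set.mem_setOf_eq, Set.mem_preimage]
    constructor <;> intro h i <;> [rw [hfT]; rw [← hfT x i]] <;> exact h i
  -- inclusion
  refine ⟨g, fun x hx => ?_, ?_⟩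
  · intro i
    rw [hgapp]
    by_cases h : i = i0
    · rw [if_pos h, h, abs_mul, abs_of_pos (inv_pos.2 hc'0),
        ← inv_mul_cancel₀ (ne_of_gt hc'0)]
      exact mul_le_mul_of_nonneg_left (hc'K x hx) (le_of_lt (inv_pos.2 hc'0))
    · simpa [h] using hKP hx i
  -- volume estimate
  · have hVfin : volume {x : EuclideanSpace ℝ (Fin m) | ∀ i, |f i x| ≤ 1} < ⊤ := by
      have hcomp : IsCompact {x : EuclideanSpace ℝ (Fin m) | ∀ i, |f i x| ≤ 1} := by
        have heq : {x : EuclideanSpace ℝ (Fin m) | ∀ i, |f i x| ≤ 1} =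
            Φ.symm '' (Set.pi Set.univ fun _ => Set.Icc (-1 : ℝ) 1) := by
          ext x
          simp only [Set.mem_setOf_eq, Set.mem_image, Set.mem_pi, Set.mem_univ, true_implies,
            Set.mem_Icc]
          constructor
          · intro h
            exact ⟨Φ x, fun i => abs_le.1 (by rw [hΦapp]; exact h i), Φ.symm_apply_apply x⟩
          · rintro ⟨y, hy, rfl⟩ i
            rw [← hΦapp, Φ.apply_symm_apply]
            exact abs_le.2 (hy i)
        rw [heq]
        exact (isCompact_univ_pi fun _ => isCompact_Icc).image
          (Φ.symm.toLinearMap.continuous_of_finiteDimensional)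
      exact hcomp.measure_lt_top
    have hVpos : 0 < volume {x : EuclideanSpace ℝ (Fin m) | ∀ i, |f i x| ≤ 1} := by
      have hUopen : IsOpen {x : EuclideanSpace ℝ (Fin m) | ∀ i, |f i x| < 1} := by
        have heq : {x : EuclideanSpace ℝ (Fin m) | ∀ i, |f i x| < 1} =
            ⋂ i, (fun x : EuclideanSpace ℝ (Fin m) => |f i x|) ⁻¹' Set.Iio 1 := by
          ext x; simp
        rw [heq]
        exact isOpen_iInter_of_finite fun i =>
          ((f i).continuous_of_finiteDimensional.abs).isOpen_preimage _ isOpen_Iio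
      have h0 : (0 : EuclideanSpace ℝ (Fin m)) ∈
          {x : EuclideanSpace ℝ (Fin m) | ∀ i, |f i x| < 1} := by simp
      calc (0 : ENNReal) < volume {x : EuclideanSpace ℝ (Fin m) | ∀ i, |f i x| < 1} :=
            hUopen.measure_pos volume ⟨0, h0⟩
        _ ≤ volume {x : EuclideanSpace ℝ (Fin m) | ∀ i, |f i x| ≤ 1} :=
            measure_mono fun x hx i => le_of_lt (hx i)
    rw [hsets, Measure.addHaar_preimage_linearMap volume (by rw [hdetT]; positivity)]
    rw [hdetT, inv_inv, abs_of_pos hc'0]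
    calc ENNReal.ofReal c' * volume {x : EuclideanSpace ℝ (Fin m) | ∀ i, |f i x| ≤ 1}
        < 1 * volume {x : EuclideanSpace ℝ (Fin m) | ∀ i, |f i x| ≤ 1} := by
          refine ENNReal.mul_lt_mul_left (ne_of_gt hVpos) (ne_of_lt hVfin) ?_
          exact ENNReal.ofReal_lt_one.2 hc'1
      _ = volume {x : EuclideanSpace ℝ (Fin m) | ∀ i, |f i x| ≤ 1} := one_mul _
end

section
/- (The inscribed Riemannian volume is Euclidean rigid; concrete form.) Let m ≥ 1 and let ‖·‖ be a norm on ℝ^m with ‖x‖ ≥ |x| for all x ∈ ℝ^m, where |·| is the standard Euclidean norm. Assume there exists a linear map A : ℝ^m → ℝ^m with |det A| ≥ 1 such that A maps the Euclidean closed unit ball {x : |x| ≤ 1} into the closed unit ball {x : ‖x‖ ≤ 1}. Then ‖x‖ = |x| for all x ∈ ℝ^m. -/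
open MeasureTheory

/-- The inscribed Riemannian volume is Euclidean rigid (concrete form): if a norm `N`
on `ℝ^m` dominates the Euclidean norm pointwise and there is a linear map `A` with
`|det A| ≥ 1` mapping the Euclidean closed unit ball into the `N`-unit ball, then
`N` equals the Euclidean norm. -/
theorem inscribed_riemannian_euclidean_rigid
    (m : ℕ) (hm : 1 ≤ m) (N : EuclideanSpace ℝ (Fin m) → ℝ)
    (N_add : ∀ x y, N (x + y) ≤ N x + N y)
    (N_smul : ∀ (c : ℝ) (x), N (c • x) = |c| * N x)
    (N_eq_zero : ∀ x, N x = 0 → x = 0)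
    (hge : ∀ x, ‖x‖ ≤ N x)
    (A : EuclideanSpace ℝ (Fin m) →ₗ[ℝ] EuclideanSpace ℝ (Fin m))
    (hdet : 1 ≤ |LinearMap.det A|)
    (hmaps : A '' Metric.closedBall (0 : EuclideanSpace ℝ (Fin m)) 1 ⊆ {x | N x ≤ 1}) :
    ∀ x, N x = ‖x‖ := by
  set B : Set (EuclideanSpace ℝ (Fin m)) := Metric.closedBall (0 : EuclideanSpace ℝ (Fin m)) 1 with hB
  set K : Set (EuclideanSpace ℝ (Fin m)) := A '' B with hK
  -- K ⊆ B
  have hKB : K ⊆ B := by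
    rintro y ⟨x, hx, rfl⟩
    have h1 : N (A x) ≤ 1 := hmaps ⟨x, hx, rfl⟩
    have := (hge (A x)).trans h1
    simpa [B, Metric.mem_closedBall, dist_eq_norm] using this
  -- volume facts
  have hvolK : volume K = ENNReal.ofReal |LinearMap.det A| * volume B :=
    Measure.addHaar_image_linearMap volume A B
  have hBfin : volume B ≠ ⊤ := (isCompact_closedBall _ _).measure_ne_top
  have hBpos : 0 < volume B :=
    Metric.measure_closedBall_pos volume (0 : EuclideanSpace ℝ (Fin m)) one_pos
  have hvolKgeB : volume B ≤ volume K := by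
    rw [hvolK]
    calc volume B = 1 * volume B := (one_mul _).symm
    _ ≤ ENNReal.ofReal |LinearMap.det A| * volume B := by
        gcongr
        rw [show (1 : ENNReal) = ENNReal.ofReal 1 by simp]
        exact ENNReal.ofReal_le_ofReal hdet
  -- K is closed and convex
  have hKcompact : IsCompact K :=
    (isCompact_closedBall _ _).image A.continuous_of_finiteDimensional
  have hKconv : Convex ℝ K := (convex_closedBall (0 : EuclideanSpace ℝ (Fin m)) 1).linear_image A
  -- Claim: B ⊆ K
  have hBK : B ⊆ K := by
    intro y hy
    by_contra hyK
    obtain ⟨f, u, hfK, hfy⟩ :=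
      geometric_hahn_banach_closed_point hKconv hKcompact.isClosed hyK
    have h0K : (0 : EuclideanSpace ℝ (Fin m)) ∈ K := ⟨0, by simp [B], by simp⟩
    have hu0 : 0 < u := by simpa using hfK 0 h0K
    have hfy0 : 0 < f y := hu0.trans hfy
    -- the point t • y, with u / f y < t < 1, lies in the open ball and has f > u
    set t : ℝ := (u / f y + 1) / 2 with ht
    have htlt : u / f y < 1 := (div_lt_one hfy0).2 hfy
    have ht1 : t < 1 := by rw [ht]; linarith
    have ht2 : u / f y < t := by rw [ht]; linarith
    have ht0 : 0 < t := lt_of_le_of_lt (by positivity) ht2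
    have hty_ball : t • y ∈ Metric.ball (0 : EuclideanSpace ℝ (Fin m)) 1 := by
      have hynorm : ‖y‖ ≤ 1 := by simpa [B, dist_eq_norm] using hy
      have : ‖t • y‖ = t * ‖y‖ := by
        rw [norm_smul, Real.norm_eq_abs, abs_of_pos ht0]
      rw [Metric.mem_ball, dist_eq_norm, sub_zero, this]
      calc t * ‖y‖ ≤ t * 1 := by gcongr
      _ < 1 := by linarith
    have hfty : u < f (t • y) := by
      rw [_root_.map_smul, smul_eq_mul]
      calc u = (u / f y) * f y := by field_simp
      _ < t * f y := by gcongr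
    -- the open cap
    set U : Set (EuclideanSpace ℝ (Fin m)) := f ⁻¹' Set.Ioi u ∩ Metric.ball (0 : EuclideanSpace ℝ (Fin m)) 1 with hU
    have hUopen : IsOpen U :=
      ((isOpen_Ioi).preimage f.continuous).inter Metric.isOpen_ball
    have hUne : U.Nonempty := ⟨t • y, hfty, hty_ball⟩
    have hUpos : 0 < volume U := hUopen.measure_pos volume hUne
    have hdisj : Disjoint K U := by
      rw [Set.disjoint_left]
      rintro z hzK ⟨hz1, _⟩
      exact absurd (hfK z hzK) (not_lt.2 (le_of_lt hz1))
    have hsub : K ∪ U ⊆ B := Set.union_subset hKB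
      (fun z hz => Metric.ball_subset_closedBall hz.2)
    have h1 : volume K + volume U ≤ volume B := by
      rw [← measure_union hdisj hUopen.measurableSet]
      exact measure_mono hsub
    have h2 : volume B + volume U ≤ volume B :=
      le_trans (by gcongr) h1
    exact absurd (lt_of_lt_of_le (ENNReal.lt_add_right hBfin hUpos.ne') h2)
      (lt_irrefl _)
  -- Now conclude: every vector of norm ≤ 1 has N ≤ 1
  have hNle : ∀ x : EuclideanSpace ℝ (Fin m), ‖x‖ ≤ 1 → N x ≤ 1 := by
    intro x hx
    exact hmaps (hBK (by simpa [B, dist_eq_norm] using hx))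
  intro x
  rcases eq_or_ne x 0 with rfl | hx
  · have := N_smul 0 0
    simp at this
    simp [this]
  · have hxpos : 0 < ‖x‖ := norm_pos_iff.2 hx
    have hunit : ‖(‖x‖⁻¹ : ℝ) • x‖ ≤ 1 := by
      rw [norm_smul, Real.norm_eq_abs, abs_of_pos (by positivity)]
      rw [inv_mul_cancel₀ hxpos.ne']
    have h1 : N ((‖x‖⁻¹ : ℝ) • x) ≤ 1 := hNle _ hunit
    have h2 : N x = ‖x‖ * N ((‖x‖⁻¹ : ℝ) • x) := by
      rw [N_smul, abs_of_pos (by positivity)]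
      field_simp
    have : N x ≤ ‖x‖ := by
      rw [h2]
      calc ‖x‖ * N ((‖x‖⁻¹ : ℝ) • x) ≤ ‖x‖ * 1 := by gcongr
      _ = ‖x‖ := mul_one _
    exact le_antisymm this (hge x)
end

section
/- (Minimal circumscribed ellipse of a regular 2n-gon.) Let n ≥ 2 and let C ⊂ ℝ² be the convex hull of the 2n points (cos(kπ/n), sin(kπ/n)) for k = 0, 1, …, 2n−1. Then for every invertible linear map A : ℝ² → ℝ² such that C is contained in A(D̄), where D̄ = {x ∈ ℝ² : |x| ≤ 1} is the Euclidean closed unit disk, one has |det A| ≥ 1. In other words, the Euclidean unit disk is an ellipse of minimal area containing C. -/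
open MeasureTheory Real

/-- geometric sum of roots of unity: complex exponential sum vanishes. -/
lemma exp_sum_vanish (n : ℕ) (hn : 2 ≤ n) :
    ∑ k ∈ Finset.range (2 * n), Complex.exp ((2 * k * π / n : ℝ) * Complex.I) = 0 := by
  have hn0 : (n : ℝ) ≠ 0 := by positivity
  have hnC : (n : ℂ) ≠ 0 := by exact_mod_cast (by positivity : (0:ℝ) < n).ne'
  set z : ℂ := Complex.exp ((2 * π / n : ℝ) * Complex.I) with hz
  have hzk : ∀ k : ℕ, Complex.exp ((2 * k * π / n : ℝ) * Complex.I) = z ^ k := by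
    intro k
    rw [hz, ← Complex.exp_nat_mul]
    congr 1
    push_cast
    field_simp
  simp_rw [hzk]
  have hz1 : z ≠ 1 := by
    rw [hz]
    rw [Ne, Complex.exp_eq_one_iff]
    rintro ⟨m, hm⟩
    have hI : (2 * π * Complex.I) ≠ 0 := by
      simp [Complex.I_ne_zero, Real.pi_ne_zero]
    have : ((2 * π / n : ℝ) : ℂ) * Complex.I = (m : ℂ) * (2 * π * Complex.I) := hm
    have h2 : ((1 / n : ℝ) : ℂ) * (2 * π * Complex.I) = (m : ℂ) * (2 * π * Complex.I) := by
      rw [← this]; push_cast; ring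
    have h3 : ((1 / n : ℝ) : ℂ) = (m : ℂ) := mul_right_cancel₀ hI h2
    have h4 : (1 / n : ℝ) = (m : ℝ) := by exact_mod_cast h3
    have h5 : (0 : ℝ) < 1 / n := by positivity
    have h6 : (1 / n : ℝ) < 1 := by
      rw [div_lt_one (by positivity)]
      exact_mod_cast lt_of_lt_of_le one_lt_two hn
    have hm0 : (0 : ℤ) < m := by exact_mod_cast h4 ▸ h5
    have hm1 : (1 : ℝ) ≤ (m : ℝ) := by exact_mod_cast hm0
    linarith
  rw [geom_sum_eq hz1]
  have hzn : z ^ (2 * n) = 1 := by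
    rw [hz, ← Complex.exp_nat_mul]
    have : (2 * n : ℕ) * (((2 * π / n : ℝ) : ℂ) * Complex.I) = (2 : ℤ) * (2 * π * Complex.I) := by
      push_cast
      field_simp
    rw [this, Complex.exp_int_mul_two_pi_mul_I]
  rw [hzn]
  simp

lemma cos_sum_vanish (n : ℕ) (hn : 2 ≤ n) :
    ∑ k ∈ Finset.range (2 * n), Real.cos (2 * k * π / n) = 0 := by
  have := exp_sum_vanish n hn
  have h := congrArg Complex.re this
  rw [Complex.re_sum] at h
  simp only [Complex.exp_ofReal_mul_I_re] at h
  simpa using h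

lemma sin_sum_vanish (n : ℕ) (hn : 2 ≤ n) :
    ∑ k ∈ Finset.range (2 * n), Real.sin (2 * k * π / n) = 0 := by
  have := exp_sum_vanish n hn
  have h := congrArg Complex.im this
  rw [Complex.im_sum] at h
  simp only [Complex.exp_ofReal_mul_I_im] at h
  simpa using h

/-- pointwise trig identity. -/
lemma point_identity (a b c d θ : ℝ) :
    (a * Real.cos θ + b * Real.sin θ)^2 + (c * Real.cos θ + d * Real.sin θ)^2 =
      (a^2+b^2+c^2+d^2)/2 + ((a^2-b^2+c^2-d^2)/2) * Real.cos (2*θ)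
        + (a*b+c*d) * Real.sin (2*θ) := by
  rw [Real.cos_two_mul, Real.sin_two_mul]
  linear_combination (b^2 + d^2) * Real.sin_sq_add_cos_sq θ

lemma det_bound (a b c d : ℝ) (h : a^2+b^2+c^2+d^2 ≤ 2) : (a*d - b*c)^2 ≤ 1 := by
  nlinarith [sq_nonneg (a*c + b*d), sq_nonneg (a^2+b^2-c^2-d^2), sq_nonneg (a^2+b^2+c^2+d^2)]

/-- Minimal circumscribed ellipse of a regular `2n`-gon: the Euclidean closed unit
disk is an ellipse of minimal area containing the regular `2n`-gon inscribed in the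
unit circle. -/
theorem regular_polygon_min_circumscribed_ellipse
    (n : ℕ) (hn : 2 ≤ n)
    (C : Set (EuclideanSpace ℝ (Fin 2)))
    (hC : C = convexHull ℝ (Set.range fun k : Fin (2 * n) =>
      (EuclideanSpace.equiv (Fin 2) ℝ).symm
        ![Real.cos (k * π / n), Real.sin (k * π / n)])) :
    ∀ A : EuclideanSpace ℝ (Fin 2) ≃ₗ[ℝ] EuclideanSpace ℝ (Fin 2),
      C ⊆ A '' Metric.closedBall (0 : EuclideanSpace ℝ (Fin 2)) 1 →
        1 ≤ |LinearMap.det (A : EuclideanSpace ℝ (Fin 2) →ₗ[ℝ] EuclideanSpace ℝ (Fin 2))| := by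
  subst hC
  intro A hA
  have hnpos : (0:ℝ) < n := by positivity
  set a : ℝ := A.symm (EuclideanSpace.single 0 1) 0 with ha
  set b : ℝ := A.symm (EuclideanSpace.single 1 1) 0 with hb
  set c : ℝ := A.symm (EuclideanSpace.single 0 1) 1 with hc
  set d : ℝ := A.symm (EuclideanSpace.single 1 1) 1 with hd
  have hnormsq : ∀ x : EuclideanSpace ℝ (Fin 2), ‖x‖^2 = x 0^2 + x 1^2 := by
    intro x
    rw [EuclideanSpace.norm_eq, Real.sq_sqrt (by positivity)]
    simp [Fin.sum_univ_two, sq_abs]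
  have hvert : ∀ k : ℕ, k < 2 * n →
      (a * Real.cos (k*π/n) + b * Real.sin (k*π/n))^2
        + (c * Real.cos (k*π/n) + d * Real.sin (k*π/n))^2 ≤ 1 := by
    intro k hk
    set θ : ℝ := (k:ℝ)*π/n with hθ
    set v : EuclideanSpace ℝ (Fin 2) :=
      (EuclideanSpace.equiv (Fin 2) ℝ).symm ![Real.cos θ, Real.sin θ] with hv
    have hmem : v ∈ convexHull ℝ (Set.range fun k : Fin (2 * n) =>
        (EuclideanSpace.equiv (Fin 2) ℝ).symm
          ![Real.cos (k * π / n), Real.sin (k * π / n)]) :=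
      subset_convexHull _ _ ⟨(⟨k, hk⟩ : Fin (2*n)), rfl⟩
    obtain ⟨y, hy, hAy⟩ := hA hmem
    have hfv : A.symm v = y := by rw [← hAy]; exact A.symm_apply_apply y
    have hnorm : ‖A.symm v‖ ≤ 1 := by
      rw [hfv]; rwa [Metric.mem_closedBall, dist_zero_right] at hy
    have hvdec : v = Real.cos θ • EuclideanSpace.single (0 : Fin 2) (1:ℝ)
        + Real.sin θ • EuclideanSpace.single (1 : Fin 2) (1:ℝ) := by
      ext i
      fin_cases i <;> simp [hv, EuclideanSpace.single_apply]
    have hfvdec : A.symm v = Real.cos θ • A.symm (EuclideanSpace.single (0 : Fin 2) (1:ℝ))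
        + Real.sin θ • A.symm (EuclideanSpace.single (1 : Fin 2) (1:ℝ)) := by
      rw [hvdec, map_add, _root_.map_smul, _root_.map_smul]
    have hc0 : A.symm v 0 = a * Real.cos θ + b * Real.sin θ := by
      rw [hfvdec]
      show Real.cos θ * _ + Real.sin θ * _ = _
      rw [ha, hb]; ring_nf; rfl
    have hc1 : A.symm v 1 = c * Real.cos θ + d * Real.sin θ := by
      rw [hfvdec]
      show Real.cos θ * _ + Real.sin θ * _ = _
      rw [hc, hd]; ring_nf; rfl
    have h2 : ‖A.symm v‖^2 ≤ 1 := by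
      calc ‖A.symm v‖^2 ≤ 1^2 := by
            exact pow_le_pow_left₀ (norm_nonneg _) hnorm 2
        _ = 1 := one_pow 2
    rw [hnormsq, hc0, hc1] at h2
    exact h2
  have hsum : (n:ℝ) * (a^2+b^2+c^2+d^2) ≤ 2 * n := by
    have hle : ∑ k ∈ Finset.range (2*n),
        ((a * Real.cos (k*π/n) + b * Real.sin (k*π/n))^2
          + (c * Real.cos (k*π/n) + d * Real.sin (k*π/n))^2)
        ≤ ∑ _k ∈ Finset.range (2*n), (1:ℝ) :=
      Finset.sum_le_sum (fun k hk => hvert k (Finset.mem_range.mp hk))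
    have heq : ∑ k ∈ Finset.range (2*n),
        ((a * Real.cos (k*π/n) + b * Real.sin (k*π/n))^2
          + (c * Real.cos (k*π/n) + d * Real.sin (k*π/n))^2)
        = (n:ℝ) * (a^2+b^2+c^2+d^2) := by
      have hpt : ∀ k ∈ Finset.range (2*n),
          (a * Real.cos (k*π/n) + b * Real.sin (k*π/n))^2
            + (c * Real.cos (k*π/n) + d * Real.sin (k*π/n))^2
          = (a^2+b^2+c^2+d^2)/2 + ((a^2-b^2+c^2-d^2)/2) * Real.cos (2*k*π/n)
              + (a*b+c*d) * Real.sin (2*k*π/n) := by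
        intro k _
        have h := point_identity a b c d ((k:ℝ)*π/n)
        have harg : 2*((k:ℝ)*π/n) = 2*(k:ℝ)*π/n := by ring
        rw [h, harg]
      rw [Finset.sum_congr rfl hpt, Finset.sum_add_distrib, Finset.sum_add_distrib,
        ← Finset.mul_sum, ← Finset.mul_sum, cos_sum_vanish n hn, sin_sum_vanish n hn,
        Finset.sum_const, Finset.card_range]
      ring
    rw [heq] at hle
    simpa using hle
  have hS : a^2+b^2+c^2+d^2 ≤ 2 := by nlinarith
  have hdb : (a*d - b*c)^2 ≤ 1 := det_bound a b c d hS
  have habs : |a*d - b*c| ≤ 1 := by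
    rw [abs_le]
    constructor <;> nlinarith
  have hdetf : LinearMap.det (A.symm : EuclideanSpace ℝ (Fin 2) →ₗ[ℝ] EuclideanSpace ℝ (Fin 2))
      = a*d - b*c := by
    rw [← LinearMap.det_toMatrix (EuclideanSpace.basisFun (Fin 2) ℝ).toBasis,
      Matrix.det_fin_two]
    simp only [LinearMap.toMatrix_apply, OrthonormalBasis.coe_toBasis,
      OrthonormalBasis.coe_toBasis_repr_apply, EuclideanSpace.basisFun_repr,
      EuclideanSpace.basisFun_apply, LinearEquiv.coe_coe]
    rfl
  have hkey := LinearEquiv.det_mul_det_symm A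
  have h1 : |LinearMap.det (A : EuclideanSpace ℝ (Fin 2) →ₗ[ℝ] EuclideanSpace ℝ (Fin 2))|
      * |a*d - b*c| = 1 := by
    rw [← hdetf, ← abs_mul, hkey, abs_one]
  nlinarith [abs_nonneg (LinearMap.det (A : EuclideanSpace ℝ (Fin 2) →ₗ[ℝ] EuclideanSpace ℝ (Fin 2))), abs_nonneg (a*d - b*c)]
end

section
/- (The circumscribed Riemannian volume is not Euclidean rigid.) There exists a norm ‖·‖ on ℝ² such that: (i) ‖x‖ ≥ |x| for all x ∈ ℝ², where |·| is the Euclidean norm; (ii) ‖·‖ ≠ |·|; and (iii) for every invertible linear map A : ℝ² → ℝ² with {x : ‖x‖ ≤ 1} ⊆ A(D̄), where D̄ = {x ∈ ℝ² : |x| ≤ 1} is the Euclidean closed unit disk, one has |det A| ≥ 1 (i.e. every ellipse containing the ‖·‖-unit ball has area at least π, so the minimal circumscribed ellipse of the ‖·‖-unit ball has the same area as that of the Euclidean disk). -/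
open MeasureTheory

noncomputable def hexNorm (x : EuclideanSpace ℝ (Fin 2)) : ℝ :=
  (2 / Real.sqrt 3) *
    max |Real.sqrt 3 / 2 * x 0 + x 1 / 2| (max |x 1| |Real.sqrt 3 / 2 * x 0 - x 1 / 2|)

lemma s3_sq : (Real.sqrt 3) ^ 2 = 3 := Real.sq_sqrt (by norm_num)
lemma s3_pos : 0 < Real.sqrt 3 := Real.sqrt_pos.mpr (by norm_num)
lemma s3_lt_two : Real.sqrt 3 < 2 := by nlinarith [s3_sq, s3_pos]

lemma max3_sq (p q m : ℝ) (h1 : |p| ≤ m) (h2 : |p + q| ≤ m) (h3 : |q| ≤ m) :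
    p^2 + q^2 + p*q ≤ m^2 := by
  have a1 : p^2 ≤ m^2 := by nlinarith [abs_nonneg p, sq_abs p]
  have a2 : q^2 ≤ m^2 := by nlinarith [abs_nonneg q, sq_abs q]
  have a3 : (p+q)^2 ≤ m^2 := by nlinarith [abs_nonneg (p+q), sq_abs (p+q)]
  rcases le_or_gt 0 (p*q) with h | h
  · nlinarith
  · rcases le_total (p^2) (q^2) with hle | hle
    · nlinarith [sq_nonneg (p+q), sq_nonneg (p-q)]
    · nlinarith [sq_nonneg (p+q), sq_nonneg (p-q)]


lemma calc_aux (p q m : ℝ) (key : p^2 + q^2 + p*q ≤ m^2) :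
    (p - q)^2/3 + (p + q)^2 ≤ 4/3 * m^2 := by nlinarith

lemma cross_bound (p0 p1 q0 q1 : ℝ) (h1 : p0^2 + p1^2 ≤ 1) (h2 : q0^2 + q1^2 ≤ 1)
    (h3 : (p0 - q0)^2 + (p1 - q1)^2 ≤ 1) : (p0*q1 - p1*q0)^2 ≤ 3/4 := by
  nlinarith [sq_nonneg (p0*q1 - p1*q0), sq_nonneg (p0*q0 + p1*q1),
    sq_nonneg (p0^2 + p1^2 - q0^2 - q1^2), sq_nonneg (p0^2 + p1^2 + q0^2 + q1^2 - 1)]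

lemma abs_le_one_of_sq_le_one (d : ℝ) (h : d^2 ≤ 1) : |d| ≤ 1 := by
  nlinarith [sq_abs d, abs_nonneg d]

lemma one_le_of_mul_eq_one (x y : ℝ) (h0 : 0 ≤ x) (hm : x * y = 1) (hy : y ≤ 1) : 1 ≤ x := by
  nlinarith

lemma hexNorm_ge (x : EuclideanSpace ℝ (Fin 2)) : ‖x‖ ≤ hexNorm x := by
  have hs2 := s3_sq; have hs0 := s3_pos
  set s := Real.sqrt 3
  set p := s / 2 * x 0 + x 1 / 2 with hp
  set q := -(s / 2 * x 0) + x 1 / 2 with hq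
  set m := max |p| (max |x 1| |s / 2 * x 0 - x 1 / 2|) with hm
  have hmp : |p| ≤ m := le_max_left _ _
  have hmq : |q| ≤ m := by
    have : |q| = |s / 2 * x 0 - x 1 / 2| := by rw [hq, ← abs_neg]; ring_nf
    rw [this]; exact le_trans (le_max_right _ _) (le_max_right _ _)
  have hm1 : |p + q| ≤ m := by
    have : p + q = x 1 := by rw [hp, hq]; ring
    rw [this]; exact le_trans (le_max_left _ _) (le_max_right _ _)
  have key : p^2 + q^2 + p*q ≤ m^2 := max3_sq p q m hmp hm1 hmq
  have hmnn : 0 ≤ m := le_trans (abs_nonneg p) hmp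
  have hsq : x 0 ^ 2 + x 1 ^ 2 ≤ ((2 / s) * m) ^ 2 := by
    have hx0 : x 0 = (p - q) / s := by rw [hp, hq]; field_simp; ring
    have hx1 : x 1 = p + q := by rw [hp, hq]; ring
    rw [hx0, hx1]
    have h1 : ((p - q) / s) ^ 2 = (p - q) ^ 2 / 3 := by rw [div_pow, hs2]
    have h2 : ((2 / s) * m) ^ 2 = 4 / 3 * m ^ 2 := by
      rw [mul_pow, div_pow, hs2]; ring
    rw [h1, h2]
    exact calc_aux p q m key
  rw [EuclideanSpace.norm_eq, Fin.sum_univ_two]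
  simp only [Real.norm_eq_abs, sq_abs]
  calc Real.sqrt (x 0 ^ 2 + x 1 ^ 2) ≤ Real.sqrt (((2 / s) * m) ^ 2) :=
        Real.sqrt_le_sqrt hsq
    _ = (2 / s) * m := Real.sqrt_sq (by positivity)

noncomputable def b2 : Module.Basis (Fin 2) ℝ (EuclideanSpace ℝ (Fin 2)) := PiLp.basisFun 2 ℝ (Fin 2)

lemma b2_repr (x : EuclideanSpace ℝ (Fin 2)) (i : Fin 2) : (b2.repr x) i = x i :=
  PiLp.basisFun_repr _ _ _ _ _

lemma det_formula (f : EuclideanSpace ℝ (Fin 2) →ₗ[ℝ] EuclideanSpace ℝ (Fin 2)) :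
    LinearMap.det f = f (b2 0) 0 * (f (b2 1) 1) - f (b2 1) 0 * (f (b2 0) 1) := by
  rw [← LinearMap.det_toMatrix b2, Matrix.det_fin_two]
  simp only [LinearMap.toMatrix_apply, b2_repr]

/-- The circumscribed Riemannian volume is not Euclidean rigid: there is a norm on
`ℝ²` dominating the Euclidean norm, different from it, such that every ellipse
`A '' D̄` containing its unit ball satisfies `|det A| ≥ 1`. -/
theorem circumscribed_riemannian_not_euclidean_rigid :
    ∃ N : EuclideanSpace ℝ (Fin 2) → ℝ,
      (∀ x y, N (x + y) ≤ N x + N y) ∧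
      (∀ (c : ℝ) (x), N (c • x) = |c| * N x) ∧
      (∀ x, N x = 0 → x = 0) ∧
      (∀ x, ‖x‖ ≤ N x) ∧
      (N ≠ fun x => ‖x‖) ∧
      (∀ A : EuclideanSpace ℝ (Fin 2) ≃ₗ[ℝ] EuclideanSpace ℝ (Fin 2),
        {x | N x ≤ 1} ⊆ A '' Metric.closedBall (0 : EuclideanSpace ℝ (Fin 2)) 1 →
          1 ≤ |LinearMap.det (A : EuclideanSpace ℝ (Fin 2) →ₗ[ℝ] EuclideanSpace ℝ (Fin 2))|) := by
  have hs2 := s3_sq; have hs0 := s3_pos; have hslt := s3_lt_two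
  refine ⟨hexNorm, ?_, ?_, ?_, hexNorm_ge, ?_, ?_⟩
  · -- subadditivity
    intro x y
    unfold hexNorm
    have hadd : ∀ i : Fin 2, (x + y) i = x i + y i := fun i => rfl
    rw [hadd 0, hadd 1, ← mul_add]
    apply mul_le_mul_of_nonneg_left _ (by positivity)
    apply max_le
    · have h : Real.sqrt 3 / 2 * (x 0 + y 0) + (x 1 + y 1) / 2
          = (Real.sqrt 3 / 2 * x 0 + x 1 / 2) + (Real.sqrt 3 / 2 * y 0 + y 1 / 2) := by ring
      rw [h]
      exact le_trans (abs_add_le _ _) (add_le_add (le_max_left _ _) (le_max_left _ _))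
    apply max_le
    · exact le_trans (abs_add_le _ _) (add_le_add
        (le_trans (le_max_left _ _) (le_max_right _ _))
        (le_trans (le_max_left _ _) (le_max_right _ _)))
    · have h : Real.sqrt 3 / 2 * (x 0 + y 0) - (x 1 + y 1) / 2
          = (Real.sqrt 3 / 2 * x 0 - x 1 / 2) + (Real.sqrt 3 / 2 * y 0 - y 1 / 2) := by ring
      rw [h]
      exact le_trans (abs_add_le _ _) (add_le_add
        (le_trans (le_max_right _ _) (le_max_right _ _))
        (le_trans (le_max_right _ _) (le_max_right _ _)))
  · -- homogeneity
    intro c x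
    unfold hexNorm
    have hsm : ∀ i : Fin 2, (c • x) i = c * x i := fun i => rfl
    rw [hsm 0, hsm 1]
    have h1 : |Real.sqrt 3 / 2 * (c * x 0) + c * x 1 / 2|
        = |c| * |Real.sqrt 3 / 2 * x 0 + x 1 / 2| := by rw [← abs_mul]; ring_nf
    have h2 : |c * x 1| = |c| * |x 1| := abs_mul _ _
    have h3 : |Real.sqrt 3 / 2 * (c * x 0) - c * x 1 / 2|
        = |c| * |Real.sqrt 3 / 2 * x 0 - x 1 / 2| := by rw [← abs_mul]; ring_nf
    rw [h1, h2, h3, ← mul_max_of_nonneg _ _ (abs_nonneg c),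
      ← mul_max_of_nonneg _ _ (abs_nonneg c)]
    ring
  · -- definiteness
    intro x hx
    have := hexNorm_ge x
    rw [hx] at this
    exact norm_le_zero_iff.mp this
  · -- not the Euclidean norm
    intro h
    set w : EuclideanSpace ℝ (Fin 2) :=
      (WithLp.equiv 2 (Fin 2 → ℝ)).symm ![Real.sqrt 3 / 2, 1 / 2] with hw
    have hw0 : w 0 = Real.sqrt 3 / 2 := rfl
    have hw1 : w 1 = 1 / 2 := rfl
    have hNw : hexNorm w = 2 / Real.sqrt 3 := by
      unfold hexNorm
      rw [hw0, hw1]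
      have e1 : |Real.sqrt 3 / 2 * (Real.sqrt 3 / 2) + 1 / 2 / 2| = 1 := by
        rw [show Real.sqrt 3 / 2 * (Real.sqrt 3 / 2) + 1 / 2 / 2
            = Real.sqrt 3 ^ 2 / 4 + 1 / 4 by ring, hs2]
        norm_num
      have e2 : |(1:ℝ) / 2| = 1 / 2 := by norm_num
      have e3 : |Real.sqrt 3 / 2 * (Real.sqrt 3 / 2) - 1 / 2 / 2| = 1 / 2 := by
        rw [show Real.sqrt 3 / 2 * (Real.sqrt 3 / 2) - 1 / 2 / 2
            = Real.sqrt 3 ^ 2 / 4 - 1 / 4 by ring, hs2]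
        norm_num
      rw [e1, e2, e3, max_self, max_eq_left (by norm_num)]
      ring
    have hnw : ‖w‖ = 1 := by
      rw [EuclideanSpace.norm_eq, Fin.sum_univ_two, hw0, hw1]
      simp only [Real.norm_eq_abs, sq_abs]
      rw [show (Real.sqrt 3 / 2) ^ 2 + (1 / 2 : ℝ) ^ 2 = Real.sqrt 3 ^ 2 / 4 + 1 / 4 by ring,
        hs2]
      norm_num
    have heq := congrFun h w
    rw [hNw, hnw] at heq
    rw [div_eq_one_iff_eq (ne_of_gt hs0)] at heq
    linarith
  · -- main ellipse inequality
    intro A hsub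
    set Bl : EuclideanSpace ℝ (Fin 2) →ₗ[ℝ] EuclideanSpace ℝ (Fin 2)
      := (A.symm : EuclideanSpace ℝ (Fin 2) →ₗ[ℝ] EuclideanSpace ℝ (Fin 2)) with hBl
    set v1 : EuclideanSpace ℝ (Fin 2) := (WithLp.equiv 2 (Fin 2 → ℝ)).symm ![1, 0] with hv1
    set v2 : EuclideanSpace ℝ (Fin 2) :=
      (WithLp.equiv 2 (Fin 2 → ℝ)).symm ![1 / 2, Real.sqrt 3 / 2] with hv2
    set v3 : EuclideanSpace ℝ (Fin 2) :=
      (WithLp.equiv 2 (Fin 2 → ℝ)).symm ![-(1 / 2), Real.sqrt 3 / 2] with hv3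
    have hv10 : v1 0 = 1 := rfl
    have hv11 : v1 1 = 0 := rfl
    have hv20 : v2 0 = 1 / 2 := rfl
    have hv21 : v2 1 = Real.sqrt 3 / 2 := rfl
    have hv30 : v3 0 = -(1 / 2) := rfl
    have hv31 : v3 1 = Real.sqrt 3 / 2 := rfl
    have memball : ∀ v : EuclideanSpace ℝ (Fin 2), hexNorm v ≤ 1 → ‖A.symm v‖ ≤ 1 := by
      intro v hv
      obtain ⟨y, hy, hAy⟩ := hsub hv
      rw [Metric.mem_closedBall, dist_zero_right] at hy
      have : A.symm v = y := by rw [← hAy, A.symm_apply_apply]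
      rwa [this]
    have bound : ∀ a b c : ℝ, |a| ≤ Real.sqrt 3 / 2 → |b| ≤ Real.sqrt 3 / 2 →
        |c| ≤ Real.sqrt 3 / 2 → 2 / Real.sqrt 3 * max |a| (max |b| |c|) ≤ 1 := by
      intro a b c h1 h2 h3
      have hmax : max |a| (max |b| |c|) ≤ Real.sqrt 3 / 2 := max_le h1 (max_le h2 h3)
      calc 2 / Real.sqrt 3 * max |a| (max |b| |c|)
          ≤ 2 / Real.sqrt 3 * (Real.sqrt 3 / 2) :=
            mul_le_mul_of_nonneg_left hmax (by positivity)
        _ = 1 := by field_simp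
    have habs0 : |(0:ℝ)| ≤ Real.sqrt 3 / 2 := by rw [abs_zero]; positivity
    have habss : |Real.sqrt 3 / 2| ≤ Real.sqrt 3 / 2 := le_of_eq (abs_of_nonneg (by positivity))
    have habsns : |-(Real.sqrt 3 / 2)| ≤ Real.sqrt 3 / 2 := by rw [abs_neg]; exact habss
    have hN1 : hexNorm v1 ≤ 1 := by
      unfold hexNorm
      rw [hv10, hv11]
      rw [show Real.sqrt 3 / 2 * 1 + 0 / 2 = Real.sqrt 3 / 2 by ring,
        show Real.sqrt 3 / 2 * 1 - 0 / 2 = Real.sqrt 3 / 2 by ring]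
      exact bound _ _ _ habss habs0 habss
    have hN2 : hexNorm v2 ≤ 1 := by
      unfold hexNorm
      rw [hv20, hv21]
      rw [show Real.sqrt 3 / 2 * (1 / 2) + Real.sqrt 3 / 2 / 2 = Real.sqrt 3 / 2 by ring,
        show Real.sqrt 3 / 2 * (1 / 2) - Real.sqrt 3 / 2 / 2 = (0:ℝ) by ring]
      exact bound _ _ _ habss habss habs0
    have hN3 : hexNorm v3 ≤ 1 := by
      unfold hexNorm
      rw [hv30, hv31]
      rw [show Real.sqrt 3 / 2 * (-(1 / 2)) + Real.sqrt 3 / 2 / 2 = (0:ℝ) by ring,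
        show Real.sqrt 3 / 2 * (-(1 / 2)) - Real.sqrt 3 / 2 / 2 = -(Real.sqrt 3 / 2) by ring]
      exact bound _ _ _ habs0 habss habsns
    set p : EuclideanSpace ℝ (Fin 2) := A.symm v2 with hpdef
    set q : EuclideanSpace ℝ (Fin 2) := A.symm v3 with hqdef
    have hp : ‖p‖ ≤ 1 := memball v2 hN2
    have hq : ‖q‖ ≤ 1 := memball v3 hN3
    have hv231 : v2 - v3 = v1 := by
      ext i
      have : ∀ j : Fin 2, (v2 - v3) j = v1 j := by
        rw [Fin.forall_fin_two]
        constructor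
        · show v2 0 - v3 0 = v1 0
          rw [hv20, hv30, hv10]; ring
        · show v2 1 - v3 1 = v1 1
          rw [hv21, hv31, hv11]; ring
      exact this i
    have hpq : ‖p - q‖ ≤ 1 := by
      have := memball v1 hN1
      rwa [← hv231, map_sub] at this
    have sqle : ∀ z : EuclideanSpace ℝ (Fin 2), ‖z‖ ≤ 1 → z 0 ^ 2 + z 1 ^ 2 ≤ 1 := by
      intro z hz
      have h2 : ‖z‖ ^ 2 ≤ 1 := by nlinarith [norm_nonneg z]
      rw [EuclideanSpace.norm_eq, Fin.sum_univ_two] at h2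
      simp only [Real.norm_eq_abs, sq_abs] at h2
      rwa [Real.sq_sqrt (by positivity)] at h2
    have hpc := sqle p hp
    have hqc := sqle q hq
    have hpqc : (p 0 - q 0) ^ 2 + (p 1 - q 1) ^ 2 ≤ 1 := sqle (p - q) hpq
    -- the basis images
    have hBb0 : Bl (b2 0) = p - q := by
      have hb0 : b2 0 = v1 := by
        ext i
        have : ∀ j : Fin 2, (b2 0) j = v1 j := by
          rw [Fin.forall_fin_two]
          refine ⟨?_, ?_⟩
          · rw [hv10]; simp [b2, PiLp.basisFun_apply]
          · rw [hv11]; simp [b2, PiLp.basisFun_apply]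
        exact this i
      rw [hb0, ← hv231, hBl, map_sub]
      rfl
    have hBb1 : Bl (b2 1) = (Real.sqrt 3)⁻¹ • (p + q) := by
      have hb1 : b2 1 = (Real.sqrt 3)⁻¹ • (v2 + v3) := by
        ext i
        have : ∀ j : Fin 2, (b2 1) j = ((Real.sqrt 3)⁻¹ • (v2 + v3)) j := by
          rw [Fin.forall_fin_two]
          refine ⟨?_, ?_⟩
          · show (b2 1) 0 = (Real.sqrt 3)⁻¹ * (v2 0 + v3 0)
            rw [hv20, hv30]
            simp [b2, PiLp.basisFun_apply]
          · show (b2 1) 1 = (Real.sqrt 3)⁻¹ * (v2 1 + v3 1)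
            rw [hv21, hv31, show Real.sqrt 3 / 2 + Real.sqrt 3 / 2 = Real.sqrt 3 by ring,
              inv_mul_cancel₀ (ne_of_gt hs0)]
            simp [b2, PiLp.basisFun_apply]
        exact this i
      rw [hb1, LinearMap.map_smul, hBl, map_add]
      rfl
    have hdetB : LinearMap.det Bl =
        (p 0 - q 0) * ((Real.sqrt 3)⁻¹ * (p 1 + q 1))
          - (Real.sqrt 3)⁻¹ * (p 0 + q 0) * (p 1 - q 1) := by
      have c0 : ∀ i : Fin 2, (p - q) i = p i - q i := fun _ => rfl
      have c1 : ∀ i : Fin 2, ((Real.sqrt 3)⁻¹ • (p + q)) i = (Real.sqrt 3)⁻¹ * (p i + q i) :=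
        fun _ => rfl
      rw [det_formula, hBb0, hBb1, c0 0, c0 1, c1 0, c1 1]
    have hcross : (p 0 * q 1 - p 1 * q 0) ^ 2 ≤ 3 / 4 :=
      cross_bound _ _ _ _ hpc hqc hpqc
    have hdetB2 : (LinearMap.det Bl) ^ 2 ≤ 1 := by
      rw [hdetB]
      have expand : (p 0 - q 0) * ((Real.sqrt 3)⁻¹ * (p 1 + q 1))
          - (Real.sqrt 3)⁻¹ * (p 0 + q 0) * (p 1 - q 1)
          = (Real.sqrt 3)⁻¹ * (2 * (p 0 * q 1 - p 1 * q 0)) := by ring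
      rw [expand, mul_pow]
      have : ((Real.sqrt 3)⁻¹) ^ 2 = 1 / 3 := by rw [inv_pow, hs2]; norm_num
      rw [this]
      linarith [hcross]
    have habsB : |LinearMap.det Bl| ≤ 1 := abs_le_one_of_sq_le_one _ hdetB2
    have hmul : LinearMap.det
        (A : EuclideanSpace ℝ (Fin 2) →ₗ[ℝ] EuclideanSpace ℝ (Fin 2)) * LinearMap.det Bl = 1 := by
      rw [← LinearMap.det_comp]
      have : (A : EuclideanSpace ℝ (Fin 2) →ₗ[ℝ] EuclideanSpace ℝ (Fin 2)) ∘ₗ Bl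
          = LinearMap.id := by
        ext x
        simp [hBl]
      rw [this, LinearMap.det_id]
    have habsmul : |LinearMap.det (A : EuclideanSpace ℝ (Fin 2) →ₗ[ℝ] EuclideanSpace ℝ (Fin 2))|
        * |LinearMap.det Bl| = 1 := by
      rw [← abs_mul, hmul, abs_one]
    exact one_le_of_mul_eq_one _ _ (abs_nonneg _) habsmul habsB
end

section
/- (Euclidean space is an essential length space.) Let m ≥ 1, let x, y ∈ ℝ^m, let N ⊆ ℝ^m be a set of Lebesgue measure zero, and let ε > 0. Then there exists a Lipschitz curve γ : [0,1] → ℝ^m with γ(0) = x, γ(1) = y, such that the set γ^{-1}(N) ⊆ [0,1] has one-dimensional Lebesgue measure zero, and the length of γ satisfies L(γ) ≤ |x − y| + ε. -/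
open MeasureTheory Set

/-- Euclidean space is an essential length space: given points `x, y`, a Lebesgue-null
set `N` and `ε > 0`, there is a Lipschitz curve from `x` to `y` spending zero time in
`N` whose length is at most `‖x - y‖ + ε`. -/
theorem euclidean_essential_length_space
    (m : ℕ) (hm : 1 ≤ m) (x y : EuclideanSpace ℝ (Fin m))
    (N : Set (EuclideanSpace ℝ (Fin m))) (hN : volume N = 0)
    (ε : ℝ) (hε : 0 < ε) :
    ∃ γ : ℝ → EuclideanSpace ℝ (Fin m),
      (∃ K : NNReal, LipschitzOnWith K γ (Icc 0 1)) ∧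
      γ 0 = x ∧ γ 1 = y ∧
      volume (γ ⁻¹' N ∩ Icc 0 1) = 0 ∧
      eVariationOn γ (Icc 0 1) ≤ ENNReal.ofReal (‖x - y‖ + ε) := by
  classical
  -- a measurable null superset of N
  obtain ⟨N', hNN', hN'meas, hN'0⟩ := exists_measurable_superset_of_null hN
  -- the "bad" set in (v, t) space
  set f : EuclideanSpace ℝ (Fin m) × ℝ → EuclideanSpace ℝ (Fin m) :=
    fun p => x + p.2 • (y - x) + (p.2 - p.2 ^ 2) • p.1 with hf
  have hfcont : Continuous f := by fun_prop
  set S : Set (EuclideanSpace ℝ (Fin m) × ℝ) := (univ ×ˢ Ioo (0:ℝ) 1) ∩ f ⁻¹' N' with hSdef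
  have hSmeas : MeasurableSet S :=
    (MeasurableSet.univ.prod measurableSet_Ioo).inter (hfcont.measurable hN'meas)
  -- sections over v (for fixed t) are null
  have hsec : ∀ t : ℝ, volume ((fun v : EuclideanSpace ℝ (Fin m) => (v, t)) ⁻¹' S) = 0 := by
    intro t
    by_cases ht : t ∈ Ioo (0:ℝ) 1
    · have hr : t - t ^ 2 ≠ 0 := by
        have h1 : 0 < t := ht.1
        have h2 : t < 1 := ht.2
        nlinarith
      have hEq : (fun v : EuclideanSpace ℝ (Fin m) => (v, t)) ⁻¹' S =
          ((t - t ^ 2) • ·) ⁻¹' (((x + t • (y - x)) + ·) ⁻¹' N') := by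
        ext v
        simp only [hSdef, hf, mem_preimage, mem_inter_iff, mem_prod, mem_univ, true_and]
        constructor
        · rintro ⟨-, h⟩; exact h
        · intro h; exact ⟨ht, h⟩
      rw [hEq, Measure.addHaar_preimage_smul volume hr]
      rw [measure_preimage_add volume _ N', hN'0, mul_zero]
    · have hEq : (fun v : EuclideanSpace ℝ (Fin m) => (v, t)) ⁻¹' S = ∅ := by
        ext v
        simp only [hSdef, mem_preimage, mem_inter_iff, mem_prod, mem_univ, true_and,
          mem_empty_iff_false, iff_false]
        intro h; exact ht h.1
      rw [hEq, measure_empty]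
  -- hence S is null for the product measure
  have hS0 : (volume.prod volume) S = 0 := by
    rw [Measure.prod_apply_symm hSmeas]
    simp only [hsec, lintegral_zero]
  -- for a.e. v, the t-section of S is null
  have hae : ∀ᵐ v : EuclideanSpace ℝ (Fin m) ∂volume, volume (Prod.mk v ⁻¹' S) = 0 := by
    filter_upwards [Measure.measure_ae_null_of_prod_null hS0] with v hv using hv
  -- pick v in the closed ball of radius ε with null t-section
  set G : Set (EuclideanSpace ℝ (Fin m)) := {v | volume (Prod.mk v ⁻¹' S) = 0} with hGdef
  have hGc : volume Gᶜ = 0 := hae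
  have hball : 0 < volume (Metric.closedBall (0:EuclideanSpace ℝ (Fin m)) ε) :=
    Metric.measure_closedBall_pos volume 0 hε
  have hex : (Metric.closedBall (0:EuclideanSpace ℝ (Fin m)) ε ∩ G).Nonempty := by
    by_contra hcon
    rw [not_nonempty_iff_eq_empty] at hcon
    have hsub : Metric.closedBall (0:EuclideanSpace ℝ (Fin m)) ε ⊆ Gᶜ := by
      intro v hv hvG
      have : v ∈ Metric.closedBall (0:EuclideanSpace ℝ (Fin m)) ε ∩ G := ⟨hv, hvG⟩
      rw [hcon] at this
      exact this
    exact absurd (le_antisymm (le_trans (measure_mono hsub) (le_of_eq hGc)) zero_le)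
      (ne_of_gt hball)
  obtain ⟨v, hvball, hvG⟩ := hex
  have hvnorm : ‖v‖ ≤ ε := by
    simpa [Metric.mem_closedBall, dist_zero_right] using hvball
  have hvG' : volume (Prod.mk v ⁻¹' S) = 0 := hvG
  -- the curve
  set γ : ℝ → EuclideanSpace ℝ (Fin m) := fun t => x + t • (y - x) + (t - t ^ 2) • v with hγ
  have hγ0 : γ 0 = x := by simp [hγ]
  have hγ1 : γ 1 = y := by
    simp only [hγ, one_smul]
    module
  -- Lipschitz bound
  set K : NNReal := ‖y - x‖₊ + ‖v‖₊ with hK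
  have hlip : LipschitzOnWith K γ (Icc 0 1) := by
    apply LipschitzOnWith.of_dist_le_mul
    intro s hs t ht
    have key : γ s - γ t = (s - t) • (y - x) + ((s - t) * (1 - (s + t))) • v := by
      simp only [hγ]
      module
    have habs : |1 - (s + t)| ≤ 1 := by
      rw [abs_le]
      refine ⟨by have := hs.2; have := ht.2; linarith, by have := hs.1; have := ht.1; linarith⟩
    rw [dist_eq_norm, dist_eq_norm, key]
    calc ‖(s - t) • (y - x) + ((s - t) * (1 - (s + t))) • v‖
        ≤ ‖(s - t) • (y - x)‖ + ‖((s - t) * (1 - (s + t))) • v‖ := norm_add_le _ _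
      _ = |s - t| * ‖y - x‖ + |s - t| * |1 - (s + t)| * ‖v‖ := by
          rw [norm_smul, norm_smul, Real.norm_eq_abs, Real.norm_eq_abs, abs_mul]
      _ ≤ |s - t| * ‖y - x‖ + |s - t| * 1 * ‖v‖ := by
          gcongr
      _ = (‖y - x‖ + ‖v‖) * |s - t| := by ring
      _ = (K : ℝ) * ‖s - t‖ := by
          rw [hK, Real.norm_eq_abs]
          push_cast
          ring
  refine ⟨γ, ⟨K, hlip⟩, hγ0, hγ1, ?_, ?_⟩
  · -- null preimage of N
    have hsub : γ ⁻¹' N ∩ Icc 0 1 ⊆ (Prod.mk v ⁻¹' S) ∪ ({0, 1} : Set ℝ) := by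
      rintro t ⟨htN, htI⟩
      by_cases h0 : t = 0
      · exact Or.inr (by simp [h0])
      by_cases h1 : t = 1
      · exact Or.inr (by simp [h1])
      left
      exact ⟨⟨trivial, ⟨lt_of_le_of_ne htI.1 (Ne.symm h0), lt_of_le_of_ne htI.2 h1⟩⟩, hNN' htN⟩
    refine le_antisymm (le_trans (measure_mono hsub) ?_) zero_le
    refine le_trans (measure_union_le _ _) ?_
    have h01 : volume ({0, 1} : Set ℝ) = 0 := Set.Finite.measure_zero (Set.toFinite _) volume
    rw [hvG', h01]
    simp
  · -- length bound
    have hmono : MonotoneOn (id : ℝ → ℝ) (Icc 0 1) := fun a _ b _ h => h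
    have hid : eVariationOn (id : ℝ → ℝ) (Icc 0 1) ≤ ENNReal.ofReal 1 := by
      have := hmono.eVariationOn_le (left_mem_Icc.mpr zero_le_one)
        (right_mem_Icc.mpr zero_le_one)
      simpa using this
    calc eVariationOn γ (Icc 0 1) = eVariationOn (γ ∘ id) (Icc 0 1) := rfl
      _ ≤ (K : ENNReal) * eVariationOn (id : ℝ → ℝ) (Icc 0 1) :=
          hlip.comp_eVariationOn_le (mapsTo_id _)
      _ ≤ (K : ENNReal) * ENNReal.ofReal 1 := by gcongr
      _ = (K : ENNReal) := by rw [ENNReal.ofReal_one, mul_one]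
      _ = ENNReal.ofReal (‖y - x‖ + ‖v‖) := by
          rw [ENNReal.ofReal_add (norm_nonneg _) (norm_nonneg _)]
          simp [hK, ENNReal.ofReal, norm_toNNReal]
      _ ≤ ENNReal.ofReal (‖x - y‖ + ε) := by
          apply ENNReal.ofReal_le_ofReal
          rw [norm_sub_rev y x]
          linarith
end

section
/- (Open subsets of Euclidean space are essential length spaces.) Let m ≥ 1, let U ⊆ ℝ^m be open, let γ : [0,1] → U be a Lipschitz curve, let N ⊆ ℝ^m be a set of Lebesgue measure zero, and let ε > 0. Then there exists a Lipschitz curve σ : [0,1] → U with σ(0) = γ(0), σ(1) = γ(1), such that σ^{-1}(N) ⊆ [0,1] has one-dimensional Lebesgue measure zero and L(σ) ≤ L(γ) + ε. -/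
open MeasureTheory Set

/-- Subadditivity of total variation under pointwise addition. -/
lemma eVariationOn_add_le' {E : Type*} [NormedAddCommGroup E] (f g : ℝ → E) (s : Set ℝ) :
    eVariationOn (fun t => f t + g t) s ≤ eVariationOn f s + eVariationOn g s := by
  apply iSup_le
  rintro ⟨n, u, hu, us⟩
  calc ∑ i ∈ Finset.range n, edist (f (u (i+1)) + g (u (i+1))) (f (u i) + g (u i))
      ≤ ∑ i ∈ Finset.range n,
          (edist (f (u (i+1))) (f (u i)) + edist (g (u (i+1))) (g (u i))) :=
        Finset.sum_le_sum fun i _ => edist_add_add_le _ _ _ _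
    _ = (∑ i ∈ Finset.range n, edist (f (u (i+1))) (f (u i))) +
        ∑ i ∈ Finset.range n, edist (g (u (i+1))) (g (u i)) := Finset.sum_add_distrib
    _ ≤ _ := add_le_add (eVariationOn.sum_le (f := f) hu us) (eVariationOn.sum_le (f := g) hu us)

/-- Open subsets of Euclidean space are essential length spaces: any Lipschitz curve
in an open set `U` can be replaced, up to `ε` of length, by a Lipschitz curve in `U`
with the same endpoints spending zero time in a given Lebesgue-null set `N`. -/
theorem open_subset_euclidean_essential_length_space
    (m : ℕ) (hm : 1 ≤ m) (U : Set (EuclideanSpace ℝ (Fin m))) (hU : IsOpen U)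
    (γ : ℝ → EuclideanSpace ℝ (Fin m)) (K : NNReal)
    (hγ : LipschitzOnWith K γ (Icc 0 1)) (hγU : ∀ t ∈ Icc (0 : ℝ) 1, γ t ∈ U)
    (N : Set (EuclideanSpace ℝ (Fin m))) (hN : volume N = 0)
    (ε : ℝ) (hε : 0 < ε) :
    ∃ σ : ℝ → EuclideanSpace ℝ (Fin m),
      (∃ K' : NNReal, LipschitzOnWith K' σ (Icc 0 1)) ∧
      (∀ t ∈ Icc (0 : ℝ) 1, σ t ∈ U) ∧
      σ 0 = γ 0 ∧ σ 1 = γ 1 ∧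
      volume (σ ⁻¹' N ∩ Icc 0 1) = 0 ∧
      eVariationOn σ (Icc 0 1) ≤ eVariationOn γ (Icc 0 1) + ENNReal.ofReal ε := by
  -- projection of ℝ onto [0,1]
  set proj : ℝ → ℝ := fun t => max 0 (min t 1) with hproj_def
  have hproj_lip : LipschitzWith 1 proj := by
    simpa using (LipschitzWith.id.min_const 1).const_max 0
  have hproj_mem : ∀ t, proj t ∈ Icc (0:ℝ) 1 := fun t =>
    ⟨le_max_left _ _, max_le zero_le_one (min_le_right _ _)⟩
  have hproj_eq : ∀ t ∈ Icc (0:ℝ) 1, proj t = t := fun t ht => by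
    simp [hproj_def, min_eq_left ht.2, max_eq_right ht.1]
  -- the extension of γ
  set γ' : ℝ → EuclideanSpace ℝ (Fin m) := fun t => γ (proj t) with hγ'_def
  have hγ'_lip : LipschitzWith K γ' := by
    rw [← lipschitzOnWith_univ]
    have := hγ.comp (hproj_lip.lipschitzOnWith (s := univ)) (fun t _ => hproj_mem t)
    simpa [Function.comp_def, hγ'_def] using this
  have hγ'_eq : EqOn γ' γ (Icc 0 1) := fun t ht => by
    simp only [hγ'_def, hproj_eq t ht]
  -- the bump function
  set φ : ℝ → ℝ := fun t => min t (1 - t) with hφ_def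
  have hφ_lip : LipschitzWith 1 φ := by
    have : LipschitzWith (max 1 (0 + 1)) φ :=
      LipschitzWith.id.min ((LipschitzWith.const 1).sub LipschitzWith.id)
    simpa using this
  have hφ_abs : ∀ t ∈ Icc (0:ℝ) 1, |φ t| ≤ 1 := by
    intro t ht
    rw [abs_le]
    constructor
    · have : (0:ℝ) ≤ φ t := le_min ht.1 (by linarith [ht.2])
      linarith
    · exact le_trans (min_le_left _ _) ht.2
  have hφ_pos : ∀ t ∈ Ioo (0:ℝ) 1, 0 < φ t := fun t ht =>
    lt_min ht.1 (by linarith [ht.2])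
  -- the null superset
  set N' := toMeasurable volume N with hN'_def
  have hN'_meas : MeasurableSet N' := measurableSet_toMeasurable _ _
  have hN'_null : volume N' = 0 := by rwa [measure_toMeasurable]
  have hNN' : N ⊆ N' := subset_toMeasurable _ _
  -- the product set and Fubini
  set S : Set (ℝ × EuclideanSpace ℝ (Fin m)) := {p | p.1 ∈ Ioo (0:ℝ) 1 ∧ γ' p.1 + φ p.1 • p.2 ∈ N'} with hS_def
  have hS_meas : MeasurableSet S := by
    have hcont : Continuous fun p : ℝ × EuclideanSpace ℝ (Fin m) => γ' p.1 + φ p.1 • p.2 := by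
      exact (hγ'_lip.continuous.comp continuous_fst).add
        (((hφ_lip.continuous.comp continuous_fst).smul continuous_snd))
    exact ((measurableSet_Ioo.preimage measurable_fst)).inter
      (hcont.measurable hN'_meas)
  have hS_null : (volume.prod volume) S = 0 := by
    rw [Measure.measure_prod_null hS_meas]
    refine Filter.Eventually.of_forall fun t => ?_
    by_cases ht : t ∈ Ioo (0:ℝ) 1
    · have hslice : Prod.mk t ⁻¹' S
          = (fun v : EuclideanSpace ℝ (Fin m) => φ t • v) ⁻¹' ((fun x : EuclideanSpace ℝ (Fin m) => γ' t + x) ⁻¹' N') := by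
        ext v
        simp only [hS_def, mem_preimage, mem_setOf_eq]
        exact ⟨fun h => h.2, fun h => ⟨ht, h⟩⟩
      have hφt : φ t ≠ 0 := ne_of_gt (hφ_pos t ht)
      simp only [Pi.zero_apply]
      rw [hslice, Measure.addHaar_preimage_smul volume hφt,
        measure_preimage_add, hN'_null, mul_zero]
    · have hslice : Prod.mk t ⁻¹' S = ∅ := by
        ext v
        simp only [hS_def, mem_preimage, mem_setOf_eq, mem_empty_iff_false, iff_false]
        exact fun h => ht h.1
      simp [hslice]
  -- a.e. shift vector is good
  have hae : ∀ᵐ v : EuclideanSpace ℝ (Fin m) ∂volume,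
      volume {t : ℝ | t ∈ Ioo (0:ℝ) 1 ∧ γ' t + φ t • v ∈ N'} = 0 := by
    have hswap : MeasurePreserving (Prod.swap : EuclideanSpace ℝ (Fin m) × ℝ → ℝ × EuclideanSpace ℝ (Fin m))
        (volume.prod volume) (volume.prod volume) := Measure.measurePreserving_swap
    have hS'_null : (volume.prod volume) ((Prod.swap : EuclideanSpace ℝ (Fin m) × ℝ → ℝ × EuclideanSpace ℝ (Fin m)) ⁻¹' S) = 0 := by
      rw [hswap.measure_preimage hS_meas.nullMeasurableSet, hS_null]
    have := Measure.measure_ae_null_of_prod_null hS'_null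
    filter_upwards [this] with v hv
    have : (Prod.mk v ⁻¹' ((Prod.swap : EuclideanSpace ℝ (Fin m) × ℝ → ℝ × EuclideanSpace ℝ (Fin m)) ⁻¹' S))
        = {t : ℝ | t ∈ Ioo (0:ℝ) 1 ∧ γ' t + φ t • v ∈ N'} := by
      ext t; simp [hS_def]
    rwa [this] at hv
  -- compactness: tube around γ lies in U
  have hcomp : IsCompact (γ '' Icc 0 1) :=
    isCompact_Icc.image_of_continuousOn hγ.continuousOn
  obtain ⟨δ, hδ, hthick⟩ := hcomp.exists_thickening_subset_open hU
    (image_subset_iff.2 fun t ht => hγU t ht)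
  -- pick a good small shift vector v
  set r := min δ ε with hr_def
  have hr : 0 < r := lt_min hδ hε
  obtain ⟨v, hv_ball, hv_good⟩ :
      ∃ v : EuclideanSpace ℝ (Fin m), v ∈ Metric.ball (0:EuclideanSpace ℝ (Fin m)) r ∧
        volume {t : ℝ | t ∈ Ioo (0:ℝ) 1 ∧ γ' t + φ t • v ∈ N'} = 0 := by
    by_contra h
    push_neg at h
    have hsub : Metric.ball (0:EuclideanSpace ℝ (Fin m)) r ⊆
        {v : EuclideanSpace ℝ (Fin m) | volume {t : ℝ | t ∈ Ioo (0:ℝ) 1 ∧ γ' t + φ t • v ∈ N'} = 0}ᶜ :=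
      fun v hv => h v hv
    have h1 : volume (Metric.ball (0:EuclideanSpace ℝ (Fin m)) r) = 0 :=
      measure_mono_null hsub hae
    have h2 : 0 < volume (Metric.ball (0:EuclideanSpace ℝ (Fin m)) r) :=
      Metric.measure_ball_pos volume 0 hr
    exact absurd h1 (ne_of_gt h2)
  have hv_norm : ‖v‖ < r := by simpa using hv_ball
  -- the perturbed curve
  set σ : ℝ → EuclideanSpace ℝ (Fin m) := fun t => γ' t + φ t • v with hσ_def
  have hsmul_lip : LipschitzWith ‖v‖₊ (fun x : ℝ => x • v) := by
    apply LipschitzWith.of_dist_le_mul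
    intro x y
    rw [dist_eq_norm, ← sub_smul, norm_smul, dist_eq_norm]
    rw [mul_comm]
    simp [Real.norm_eq_abs]
  have hφv_lip : LipschitzWith (‖v‖₊ * 1) (fun t : ℝ => φ t • v) :=
    hsmul_lip.comp hφ_lip
  refine ⟨σ, ⟨K + ‖v‖₊ * 1, by exact (hγ'_lip.add hφv_lip).lipschitzOnWith (s := Icc 0 1)⟩, ?_, ?_, ?_, ?_, ?_⟩
  · -- stays in U
    intro t ht
    apply hthick
    rw [Metric.mem_thickening_iff]
    refine ⟨γ t, mem_image_of_mem γ ht, ?_⟩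
    have : dist (σ t) (γ t) = ‖φ t • v‖ := by
      rw [hσ_def]
      simp only [hγ'_eq ht]
      rw [dist_eq_norm]
      congr 1
      abel
    rw [this, norm_smul, Real.norm_eq_abs]
    calc |φ t| * ‖v‖ ≤ 1 * ‖v‖ :=
          mul_le_mul_of_nonneg_right (hφ_abs t ht) (norm_nonneg v)
      _ = ‖v‖ := one_mul _
      _ < r := hv_norm
      _ ≤ δ := min_le_left _ _
  · -- σ 0 = γ 0
    have h0 : φ 0 = 0 := by simp [hφ_def]
    simp [hσ_def, h0, hγ'_eq (left_mem_Icc.2 zero_le_one)]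
  · -- σ 1 = γ 1
    have h1 : φ 1 = 0 := by simp [hφ_def]
    simp [hσ_def, h1, hγ'_eq (right_mem_Icc.2 zero_le_one)]
  · -- preimage of N is null
    refine measure_mono_null (t := {t : ℝ | t ∈ Ioo (0:ℝ) 1 ∧ γ' t + φ t • v ∈ N'}
      ∪ {0, 1}) ?_ ?_
    · rintro t ⟨htN, ht⟩
      by_cases htI : t ∈ Ioo (0:ℝ) 1
      · exact Or.inl ⟨htI, hNN' htN⟩
      · right
        rcases eq_or_lt_of_le ht.1 with h | h
        · exact Or.inl h.symm
        · rcases eq_or_lt_of_le ht.2 with h' | h'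
          · exact Or.inr h'
          · exact absurd ⟨h, h'⟩ htI
    · exact measure_union_null hv_good
        (((Set.finite_singleton (1:ℝ)).insert 0).measure_zero volume)
  · -- length estimate
    have h1 : eVariationOn σ (Icc 0 1)
        ≤ eVariationOn γ' (Icc 0 1) + eVariationOn (fun t : ℝ => φ t • v) (Icc 0 1) :=
      eVariationOn_add_le' γ' (fun t : ℝ => φ t • v) (Icc 0 1)
    have h2 : eVariationOn γ' (Icc (0:ℝ) 1) = eVariationOn γ (Icc 0 1) :=
      eVariationOn.eq_of_eqOn hγ'_eq
    have h3 : eVariationOn (fun t : ℝ => φ t • v) (Icc (0:ℝ) 1) ≤ ENNReal.ofReal ε := by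
      have hid : eVariationOn (id : ℝ → ℝ) (Icc (0:ℝ) 1) ≤ 1 := by
        have := (monotoneOn_id (s := Icc (0:ℝ) 1)).eVariationOn_le
          (left_mem_Icc.2 zero_le_one) (right_mem_Icc.2 zero_le_one)
        simpa using this
      have hφvar : eVariationOn φ (Icc (0:ℝ) 1) ≤ 1 := by
        have := (hφ_lip.lipschitzOnWith (s := univ)).comp_eVariationOn_le
          (g := (id : ℝ → ℝ)) (s := Icc (0:ℝ) 1) (mapsTo_univ _ _)
        calc eVariationOn φ (Icc (0:ℝ) 1) = eVariationOn (φ ∘ id) (Icc (0:ℝ) 1) := rfl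
          _ ≤ (1 : NNReal) * eVariationOn (id : ℝ → ℝ) (Icc (0:ℝ) 1) := this
          _ ≤ 1 * 1 := by exact mul_le_mul_right hid _
          _ = 1 := by simp
      have hvar : eVariationOn (fun t : ℝ => φ t • v) (Icc (0:ℝ) 1)
          ≤ (‖v‖₊ : ENNReal) * eVariationOn φ (Icc (0:ℝ) 1) :=
        (hsmul_lip.lipschitzOnWith (s := univ)).comp_eVariationOn_le
          (g := φ) (s := Icc (0:ℝ) 1) (mapsTo_univ _ _)
      calc eVariationOn (fun t : ℝ => φ t • v) (Icc (0:ℝ) 1)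
          ≤ (‖v‖₊ : ENNReal) * eVariationOn φ (Icc (0:ℝ) 1) := hvar
        _ ≤ (‖v‖₊ : ENNReal) * 1 := mul_le_mul_right hφvar _
        _ = (‖v‖₊ : ENNReal) := mul_one _
        _ = ENNReal.ofReal ‖v‖ := (ofReal_norm v).symm
        _ ≤ ENNReal.ofReal ε :=
            ENNReal.ofReal_le_ofReal (le_of_lt (lt_of_lt_of_le hv_norm (min_le_right _ _)))
    calc eVariationOn σ (Icc (0:ℝ) 1)
        ≤ eVariationOn γ' (Icc 0 1) + eVariationOn (fun t : ℝ => φ t • v) (Icc 0 1) := h1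
      _ ≤ eVariationOn γ (Icc 0 1) + ENNReal.ofReal ε := by rw [h2]; exact add_le_add_right h3 _
end

section
/- (Shortcut metric construction, generalizing the sphere counterexample.) Let (X, D) be a metric space and let C ⊆ X be a nonempty subset. Define d : X × X → ℝ by d(x,y) = min( D(x,y), inf_{v,w ∈ C} ( D(x,v) + (1/2) D(v,w) + D(w,y) ) ). Then d is a metric on X and (1/2) D(x,y) ≤ d(x,y) ≤ D(x,y) for all x, y ∈ X. In particular the identity map (X,D) → (X,d) is 1-Lipschitz and its inverse is 2-Lipschitz. -/
open Set

noncomputable def scIn {X : Type*} [MetricSpace X] (C : Set X) (x y : X) : ℝ :=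
  ⨅ v : C, ⨅ w : C, dist x (v : X) + (1 / 2) * dist (v : X) (w : X) + dist (w : X) y

lemma scIn_bdd1 {X : Type*} [MetricSpace X] (C : Set X) (x y : X) (v : C) :
    BddBelow (Set.range fun w : C =>
      dist x (v : X) + (1 / 2) * dist (v : X) (w : X) + dist (w : X) y) := by
  refine ⟨0, ?_⟩
  rintro _ ⟨w, rfl⟩
  positivity

lemma scIn_bdd2 {X : Type*} [MetricSpace X] (C : Set X) [Nonempty C] (x y : X) :
    BddBelow (Set.range fun v : C =>
      ⨅ w : C, dist x (v : X) + (1 / 2) * dist (v : X) (w : X) + dist (w : X) y) := by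
  refine ⟨0, ?_⟩
  rintro _ ⟨v, rfl⟩
  exact le_ciInf fun w => by positivity

lemma scIn_le {X : Type*} [MetricSpace X] (C : Set X) [Nonempty C] (x y : X) (v w : C) :
    scIn C x y ≤ dist x (v : X) + (1 / 2) * dist (v : X) (w : X) + dist (w : X) y :=
  le_trans (ciInf_le (scIn_bdd2 C x y) v) (ciInf_le (scIn_bdd1 C x y v) w)

lemma half_le_scIn {X : Type*} [MetricSpace X] (C : Set X) [Nonempty C] (x y : X) :
    (1 / 2) * dist x y ≤ scIn C x y :=
  le_ciInf fun v => le_ciInf fun w => by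
    have h := dist_triangle4 x (v : X) (w : X) y
    have h1 : (0:ℝ) ≤ dist x (v : X) := dist_nonneg
    have h2 : (0:ℝ) ≤ dist (w : X) y := dist_nonneg
    linarith

/-- Shortcut metric construction: given a metric space `(X, D)` and a nonempty set
`C ⊆ X`, the function
`d(x,y) = min(D(x,y), inf_{v,w ∈ C} (D(x,v) + D(v,w)/2 + D(w,y)))`
is a metric on `X` satisfying `D/2 ≤ d ≤ D`; in particular the identity
`(X,D) → (X,d)` is 1-Lipschitz with 2-Lipschitz inverse. -/
theorem shortcut_metric
    (X : Type*) [MetricSpace X] (C : Set X) (hC : C.Nonempty)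
    (d : X → X → ℝ)
    (hd : ∀ x y, d x y =
      min (dist x y) (⨅ v : C, ⨅ w : C, dist x (v : X) + (1 / 2) * dist (v : X) (w : X) + dist (w : X) y)) :
    (∀ x y, 0 ≤ d x y) ∧
    (∀ x y, d x y = 0 ↔ x = y) ∧
    (∀ x y, d x y = d y x) ∧
    (∀ x y z, d x z ≤ d x y + d y z) ∧
    (∀ x y, (1 / 2) * dist x y ≤ d x y ∧ d x y ≤ dist x y) := by
  haveI : Nonempty C := hC.to_subtype
  have hd' : ∀ x y, d x y = min (dist x y) (scIn C x y) := hd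
  have hdle : ∀ x y, d x y ≤ dist x y := fun x y => (hd' x y) ▸ min_le_left _ _
  have hdleI : ∀ x y, d x y ≤ scIn C x y := fun x y => (hd' x y) ▸ min_le_right _ _
  have hhalf : ∀ x y, (1 / 2) * dist x y ≤ d x y := by
    intro x y
    rw [hd']
    refine le_min ?_ (half_le_scIn C x y)
    have := dist_nonneg (x := x) (y := y)
    linarith
  have hnonneg : ∀ x y, 0 ≤ d x y := fun x y => by
    have := hhalf x y
    have := dist_nonneg (x := x) (y := y)
    linarith
  have hIsymm : ∀ x y : X, scIn C x y ≤ scIn C y x := by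
    intro x y
    refine le_ciInf fun v => le_ciInf fun w => ?_
    have h := scIn_le C x y w v
    have e1 : dist x (w : X) = dist (w : X) x := dist_comm _ _
    have e2 : dist (w : X) (v : X) = dist (v : X) (w : X) := dist_comm _ _
    have e3 : dist (v : X) y = dist y (v : X) := dist_comm _ _
    linarith
  refine ⟨hnonneg, ?_, ?_, ?_, fun x y => ⟨hhalf x y, hdle x y⟩⟩
  · intro x y
    constructor
    · intro h
      have := hhalf x y
      have := dist_nonneg (x := x) (y := y)
      have : dist x y = 0 := by linarith
      exact dist_eq_zero.mp this
    · rintro rfl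
      have h1 : d x x ≤ dist x x := hdle x x
      have h2 : 0 ≤ d x x := hnonneg x x
      rw [dist_self] at h1
      linarith
  · intro x y
    have e1 : dist x y = dist y x := dist_comm _ _
    rw [hd', hd', e1]
    have := hIsymm x y
    have := hIsymm y x
    have : scIn C x y = scIn C y x := le_antisymm (hIsymm x y) (hIsymm y x)
    rw [this]
  · intro x y z
    rcases min_cases (dist x y) (scIn C x y) with ⟨e1, _⟩ | ⟨e1, _⟩ <;>
      rcases min_cases (dist y z) (scIn C y z) with ⟨e2, _⟩ | ⟨e2, _⟩ <;>
      rw [hd' x y, hd' y z, e1, e2]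
    · calc d x z ≤ dist x z := hdle x z
        _ ≤ dist x y + dist y z := dist_triangle x y z
    · -- d x z ≤ dist x y + scIn C y z
      have key : d x z - dist x y ≤ scIn C y z := by
        refine le_ciInf fun v => le_ciInf fun w => ?_
        have h1 := (hdleI x z).trans (scIn_le C x z v w)
        have h2 := dist_triangle x y (v : X)
        linarith
      linarith
    · have key : d x z - dist y z ≤ scIn C x y := by
        refine le_ciInf fun v => le_ciInf fun w => ?_
        have h1 := (hdleI x z).trans (scIn_le C x z v w)
        have h2 := dist_triangle (w : X) y z
        linarith
      linarith
    · have key : d x z - scIn C y z ≤ scIn C x y := by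
        refine le_ciInf fun v => le_ciInf fun w => ?_
        rw [sub_le_iff_le_add, add_comm]
        have key2 : d x z - (dist x (v : X) + (1 / 2) * dist (v : X) (w : X) + dist (w : X) y)
            ≤ scIn C y z := by
          refine le_ciInf fun v' => le_ciInf fun w' => ?_
          have h1 := (hdleI x z).trans (scIn_le C x z v w')
          have h2 := dist_triangle (v : X) (w : X) (v' : X)
          have h3 := dist_triangle (w : X) y (v' : X)
          have h4 := dist_triangle (v : X) (v' : X) (w' : X)
          have h5 : (0:ℝ) ≤ dist (w : X) y := dist_nonneg
          have h6 : (0:ℝ) ≤ dist y (v' : X) := dist_nonneg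
          linarith
        linarith
      linarith
end

section
/- (Open maps that are almost injective are injective.) Let X be a Hausdorff topological space, let Y be a topological space equipped with a Borel measure ν such that ν(V) > 0 for every nonempty open set V ⊆ Y, and let f : X → Y be an open map (the image of every open set is open). If the set { y ∈ Y : there exist x₁ ≠ x₂ in X with f(x₁) = y and f(x₂) = y } is ν-null, then f is injective. -/
open MeasureTheory

/-- Open maps that are almost injective are injective: if `X` is Hausdorff, `ν` is a
Borel measure on `Y` that is positive on nonempty open sets, `f : X → Y` is an open
map, and the set of values attained more than once is `ν`-null, then `f` is
injective. -/
theorem openMap_almost_injective_injective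
    (X Y : Type*) [TopologicalSpace X] [T2Space X]
    [TopologicalSpace Y] [MeasurableSpace Y] [BorelSpace Y]
    (ν : Measure Y) (hν : ∀ V : Set Y, IsOpen V → V.Nonempty → 0 < ν V)
    (f : X → Y) (hf : IsOpenMap f)
    (hnull : ν {y : Y | ∃ x₁ x₂ : X, x₁ ≠ x₂ ∧ f x₁ = y ∧ f x₂ = y} = 0) :
    Function.Injective f := by
  intro x₁ x₂ hfx
  by_contra hne
  obtain ⟨U₁, U₂, hU₁, hU₂, hx₁, hx₂, hdisj⟩ := t2_separation hne
  set V := f '' U₁ ∩ f '' U₂ with hV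
  have hVopen : IsOpen V := (hf U₁ hU₁).inter (hf U₂ hU₂)
  have hVne : V.Nonempty := ⟨f x₁, ⟨x₁, hx₁, rfl⟩, ⟨x₂, hx₂, hfx.symm⟩⟩
  have hsub : V ⊆ {y : Y | ∃ x₁ x₂ : X, x₁ ≠ x₂ ∧ f x₁ = y ∧ f x₂ = y} := by
    rintro y ⟨⟨a, ha, rfl⟩, ⟨b, hb, hab⟩⟩
    refine ⟨a, b, fun h => ?_, rfl, hab⟩
    exact hdisj.ne_of_mem ha hb h
  have := hν V hVopen hVne
  have : ν V = 0 := measure_mono_null hsub hnull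
  exact (‹0 < ν V›).ne' this
end

section
/- (Local-to-global step of the main rigidity theorem.) Let (M, d) be a metric space equipped with a Borel measure ν which is an essential length space, let (X, d_X) be a metric space, and let f : X → M be a bijective 1-Lipschitz map with inverse g : M → X. Suppose there is a ν-null set N ⊆ M such that for every Lipschitz curve γ : [0,1] → M with γ^{-1}(N) of one-dimensional Lebesgue measure zero, the length of g ∘ γ satisfies L(g ∘ γ) ≤ L(γ). Then f is an isometry: d_X(a,b) = d(f(a), f(b)) for all a, b ∈ X. -/
open MeasureTheory Set

/-- Local-to-global step of the main rigidity theorem: let `(M, d, ν)` be an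
essential length space, `f : X → M` a bijective 1-Lipschitz map with inverse `g`.
If there is a `ν`-null set `N` such that `g` does not increase the length of any
Lipschitz curve spending zero time in `N`, then `f` is an isometry. -/
theorem local_to_global_isometry
    (M : Type*) [MetricSpace M] [MeasurableSpace M] (ν : Measure M)
    (X : Type*) [MetricSpace X]
    (hess : ∀ (x y : M) (N : Set M), ν N = 0 → ∀ ε : ℝ, 0 < ε →
      ∃ γ : ℝ → M, (∃ K : NNReal, LipschitzOnWith K γ (Icc 0 1)) ∧
        γ 0 = x ∧ γ 1 = y ∧
        volume (γ ⁻¹' N ∩ Icc 0 1) = 0 ∧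
        eVariationOn γ (Icc 0 1) ≤ ENNReal.ofReal (dist x y + ε))
    (f : X → M) (g : M → X)
    (hf : Function.Bijective f) (hfg : Function.LeftInverse g f)
    (hlip : LipschitzWith 1 f)
    (N : Set M) (hN : ν N = 0)
    (hcurve : ∀ γ : ℝ → M, (∃ K : NNReal, LipschitzOnWith K γ (Icc 0 1)) →
      volume (γ ⁻¹' N ∩ Icc 0 1) = 0 →
      eVariationOn (g ∘ γ) (Icc 0 1) ≤ eVariationOn γ (Icc 0 1)) :
    ∀ a b : X, dist a b = dist (f a) (f b) := by
  intro a b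
  have hle : dist (f a) (f b) ≤ dist a b := by
    simpa using hlip.dist_le_mul a b
  refine le_antisymm ?_ hle
  -- show dist a b ≤ dist (f a) (f b) + ε for all ε > 0
  refine le_of_forall_pos_le_add fun ε hε => ?_
  obtain ⟨γ, hKlip, h0, h1, hnull, hlen⟩ := hess (f a) (f b) N hN ε hε
  have key : edist a b ≤ ENNReal.ofReal (dist (f a) (f b) + ε) := by
    calc edist a b = edist ((g ∘ γ) 0) ((g ∘ γ) 1) := by
            simp [Function.comp, h0, h1, hfg a, hfg b]
      _ ≤ eVariationOn (g ∘ γ) (Icc 0 1) :=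
            eVariationOn.edist_le _ (by simp : (0:ℝ) ∈ Icc (0:ℝ) 1)
              (by simp [zero_le_one] : (1:ℝ) ∈ Icc (0:ℝ) 1)
      _ ≤ eVariationOn γ (Icc 0 1) := hcurve γ hKlip hnull
      _ ≤ ENNReal.ofReal (dist (f a) (f b) + ε) := hlen
  have := ENNReal.toReal_mono (by simp) key
  rwa [ENNReal.toReal_ofReal (by positivity), ← dist_edist] at this
end
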